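/- arXiv:math/0310138 — 4 statements merged into one kernel-verified Lean document; each statement's English description precedes it below -/
import Mathlib

section
/- Let X be a locally compact Hausdorff abelian topological (additive) group which is second countable, and let μ be a nonzero finite Borel measure on X which is inner regular. For g ∈ C₀(X, ℂ) define (T_μ g)(x) = ∫ X, g (x - t) dμ(t). Then T_μ g ∈ C₀(X, ℂ) for every g ∈ C₀(X, ℂ), the map T_μ : C₀(X, ℂ) → C₀(X, ℂ) is linear and bounded, and its operator norm equals the total mass: ‖T_μ‖ = (μ(univ)).toReal. (This computes the multiplier norm ‖T_φ‖ for φ ∈ B(G), G locally compact abelian, and shows it agrees with the measure norm ‖μ‖ = ‖φ‖.) -/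
open MeasureTheory Filter Set
open scoped ZeroAtInfty Topology ENNReal Pointwise
set_option linter.unusedSectionVars false

noncomputable section MultiplierAux

variable {X : Type*} [AddCommGroup X] [TopologicalSpace X] [IsTopologicalAddGroup X]
    [LocallyCompactSpace X] [T2Space X] [SecondCountableTopology X]
    [MeasurableSpace X] [BorelSpace X]
    (μ : Measure X) [IsFiniteMeasure μ]

private lemma mult_integrable_shift (g : C₀(X, ℂ)) (x : X) :
    Integrable (fun t => g (x - t)) μ := by
  have h : Continuous fun t : X => x - t := continuous_const.sub continuous_id
  exact (g.toBCF.compContinuous ⟨fun t : X => x - t, h⟩).integrable μ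

private lemma mult_exists_compact (hreg : μ.InnerRegular) {δ : ℝ≥0∞} (hδ : δ ≠ 0) :
    ∃ K : Set X, IsCompact K ∧ μ Kᶜ ≤ δ := by
  rcases le_or_gt (μ univ) δ with h | h
  · exact ⟨∅, isCompact_empty, le_trans (measure_mono (subset_univ _)) h⟩
  · have hlt : μ univ - δ < μ univ :=
      ENNReal.sub_lt_self (measure_ne_top μ _)
        ((lt_of_le_of_lt (zero_le (a := δ)) h).ne') hδ
    obtain ⟨K, -, hKc, hK⟩ := hreg.innerRegular MeasurableSet.univ _ hlt
    refine ⟨K, hKc, ?_⟩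
    have h2 : μ univ ≤ μ K + δ := tsub_le_iff_right.mp hK.le
    rw [measure_compl hKc.measurableSet (measure_ne_top μ _)]
    exact tsub_le_iff_right.mpr (by rwa [add_comm] at h2)

/-- convolution of `μ` with `g`, as a `C₀` function. -/
private def multConv (hreg : μ.InnerRegular) (g : C₀(X, ℂ)) : C₀(X, ℂ) where
  toFun x := ∫ t : X, g (x - t) ∂μ
  continuous_toFun := by
    apply continuous_of_dominated (bound := fun _ : X => ‖g‖)
    · exact fun x => (mult_integrable_shift μ g x).aestronglyMeasurable
    · intro x
      filter_upwards with t
      have := g.toBCF.norm_coe_le_norm (x - t)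
      simpa [ZeroAtInftyContinuousMap.norm_toBCF_eq_norm] using this
    · exact integrable_const _
    · filter_upwards with t
      exact g.continuous.comp (continuous_id.sub continuous_const)
  zero_at_infty' := by
    rw [Metric.tendsto_nhds]
    intro ε hε
    set M : ℝ := (μ univ).toReal with hM
    have hM0 : 0 ≤ M := ENNReal.toReal_nonneg
    set B : ℝ := ‖g‖ with hB
    have hB0 : 0 ≤ B := norm_nonneg _
    set δ : ℝ := ε / (M + B + 1) with hδdef
    have hδ : 0 < δ := div_pos hε (by positivity)
    obtain ⟨K, hKc, hKμ⟩ := mult_exists_compact μ hreg (δ := ENNReal.ofReal δ)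
      ((ENNReal.ofReal_pos.mpr hδ).ne')
    obtain ⟨L, hLc, hL⟩ := hasBasis_cocompact.eventually_iff.mp
      ((Metric.tendsto_nhds.mp (ZeroAtInftyContinuousMapClass.zero_at_infty g)) δ hδ)
    rw [hasBasis_cocompact.eventually_iff]
    refine ⟨L + K, hLc.add hKc, fun x hx => ?_⟩
    have hxK : ∀ t ∈ K, ‖g (x - t)‖ ≤ δ := by
      intro t ht
      have : x - t ∉ L := by
        intro hmem
        have hx' : (x - t) + t = x := sub_add_cancel x t
        exact hx (hx' ▸ Set.add_mem_add hmem ht)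
      have := hL this
      simpa [dist_eq_norm] using this.le
    have hint := mult_integrable_shift μ g x
    have hsplit : (∫ t : X, g (x - t) ∂μ)
        = (∫ t in K, g (x - t) ∂μ) + ∫ t in Kᶜ, g (x - t) ∂μ :=
      (integral_add_compl hKc.measurableSet hint).symm
    have h1 : ‖∫ t in K, g (x - t) ∂μ‖ ≤ δ * M := by
      have := norm_setIntegral_le_of_norm_le_const (μ := μ) (s := K)
        (measure_lt_top μ K) hxK
      refine this.trans ?_
      rw [measureReal_def]
      have : (μ K).toReal ≤ M := ENNReal.toReal_mono (measure_ne_top μ _)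
        (measure_mono (subset_univ _))
      nlinarith
    have h2 : ‖∫ t in Kᶜ, g (x - t) ∂μ‖ ≤ B * δ := by
      have hb : ∀ t ∈ Kᶜ, ‖g (x - t)‖ ≤ B := by
        intro t _
        have := g.toBCF.norm_coe_le_norm (x - t)
        simpa [ZeroAtInftyContinuousMap.norm_toBCF_eq_norm] using this
      have := norm_setIntegral_le_of_norm_le_const (μ := μ) (s := Kᶜ)
        (measure_lt_top μ Kᶜ) hb
      refine this.trans ?_
      rw [measureReal_def]
      have h3 : (μ Kᶜ).toReal ≤ δ := by
        have := ENNReal.toReal_mono (by simp) hKμ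
        simpa [ENNReal.toReal_ofReal hδ.le] using this
      nlinarith
    have : ‖∫ t : X, g (x - t) ∂μ‖ ≤ δ * M + B * δ := by
      rw [hsplit]
      exact (norm_add_le _ _).trans (add_le_add h1 h2)
    have hfin : δ * M + B * δ < ε := by
      have : δ * (M + B + 1) = ε := div_mul_cancel₀ ε (by positivity)
      nlinarith
    simpa [dist_eq_norm] using lt_of_le_of_lt ‹‖∫ t : X, g (x - t) ∂μ‖ ≤ δ * M + B * δ› hfin

private lemma multConv_norm_le (hreg : μ.InnerRegular) (g : C₀(X, ℂ)) :
    ‖multConv μ hreg g‖ ≤ (μ univ).toReal * ‖g‖ := by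
  rw [← ZeroAtInftyContinuousMap.norm_toBCF_eq_norm]
  refine (BoundedContinuousFunction.norm_le (by positivity)).mpr fun x => ?_
  have h : ∀ᵐ t ∂μ, ‖g (x - t)‖ ≤ ‖g‖ := by
    filter_upwards with t
    have := g.toBCF.norm_coe_le_norm (x - t)
    simpa [ZeroAtInftyContinuousMap.norm_toBCF_eq_norm] using this
  have := norm_integral_le_of_norm_le_const (μ := μ) h
  calc ‖(multConv μ hreg g).toBCF x‖ = ‖∫ t : X, g (x - t) ∂μ‖ := rfl
    _ ≤ ‖g‖ * (μ univ).toReal := this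
    _ = (μ univ).toReal * ‖g‖ := mul_comm _ _

private def multLin (hreg : μ.InnerRegular) : C₀(X, ℂ) →ₗ[ℂ] C₀(X, ℂ) where
  toFun := multConv μ hreg
  map_add' g h := by
    ext x
    show (∫ t : X, (g + h) (x - t) ∂μ)
        = (∫ t : X, g (x - t) ∂μ) + ∫ t : X, h (x - t) ∂μ
    rw [← integral_add (mult_integrable_shift μ g x) (mult_integrable_shift μ h x)]
    rfl
  map_smul' c g := by
    ext x
    show (∫ t : X, (c • g) (x - t) ∂μ) = c • ∫ t : X, g (x - t) ∂μ
    rw [← integral_smul]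
    rfl

private def multCLM (hreg : μ.InnerRegular) : C₀(X, ℂ) →L[ℂ] C₀(X, ℂ) :=
  LinearMap.mkContinuous (multLin μ hreg) (μ univ).toReal (multConv_norm_le μ hreg)

end MultiplierAux

/-- For a nonzero finite inner regular Borel measure `μ` on a second countable
locally compact Hausdorff abelian group `X`, convolution against `μ` defines a
bounded linear operator `T_μ` on `C₀(X, ℂ)`, `(T_μ g)(x) = ∫ g (x - t) dμ(t)`,
whose operator norm equals the total mass of `μ`. -/
theorem multiplier_norm_eq_total_mass
    {X : Type*} [AddCommGroup X] [TopologicalSpace X] [IsTopologicalAddGroup X]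
    [LocallyCompactSpace X] [T2Space X] [SecondCountableTopology X]
    [MeasurableSpace X] [BorelSpace X]
    (μ : Measure X) [IsFiniteMeasure μ] (hμ : μ ≠ 0) (hreg : μ.InnerRegular) :
    ∃ T : C₀(X, ℂ) →L[ℂ] C₀(X, ℂ),
      (∀ (g : C₀(X, ℂ)) (x : X), T g x = ∫ t : X, g (x - t) ∂μ) ∧
      ‖T‖ = (μ Set.univ).toReal := by
  refine ⟨multCLM μ hreg, fun g x => rfl, ?_⟩
  refine le_antisymm
    (LinearMap.mkContinuous_norm_le _ ENNReal.toReal_nonneg _) ?_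
  refine le_of_forall_pos_le_add fun ε hε => ?_
  obtain ⟨K, hKc, hKμ⟩ := mult_exists_compact μ hreg (δ := ENNReal.ofReal ε)
    ((ENNReal.ofReal_pos.mpr hε).ne')
  have hMK : (μ univ).toReal ≤ (μ K).toReal + ε := by
    have h1 : μ univ ≤ μ K + ENNReal.ofReal ε := by
      calc μ univ = μ K + μ Kᶜ := (measure_add_measure_compl hKc.measurableSet).symm
        _ ≤ μ K + ENNReal.ofReal ε := add_le_add_right hKμ _
    have h2 := ENNReal.toReal_mono
      (by simp [ENNReal.add_ne_top, measure_ne_top]) h1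
    rwa [ENNReal.toReal_add (measure_ne_top μ _) ENNReal.ofReal_ne_top,
      ENNReal.toReal_ofReal hε.le] at h2
  -- Urysohn function equal to 1 on -K
  obtain ⟨f, hf1, -, hfc, hf01⟩ :=
    exists_continuous_one_zero_of_isCompact hKc.neg isClosed_empty (disjoint_empty _)
  -- the C₀ test function
  have hzero : Tendsto (fun y => (f y : ℂ)) (cocompact X) (𝓝 0) := by
    have hev : ∀ᶠ y in cocompact X, (0 : ℂ) = (f y : ℂ) := by
      rw [hasBasis_cocompact.eventually_iff]
      exact ⟨tsupport f, hfc, fun y hy => by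
        simp [image_eq_zero_of_notMem_tsupport hy]⟩
    exact tendsto_const_nhds.congr' hev
  set g0 : C₀(X, ℂ) :=
    { toFun := fun y => (f y : ℂ)
      continuous_toFun := Complex.continuous_ofReal.comp f.continuous
      zero_at_infty' := hzero } with hg0
  have hg0norm : ‖g0‖ ≤ 1 := by
    rw [← ZeroAtInftyContinuousMap.norm_toBCF_eq_norm]
    refine (BoundedContinuousFunction.norm_le zero_le_one).mpr fun y => ?_
    have := hf01 y
    calc ‖(g0.toBCF) y‖ = |f y| := by simp [hg0]
      _ ≤ 1 := abs_le.mpr ⟨by linarith [this.1], this.2⟩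
  have hint1 : Integrable (fun t => f (-t)) μ :=
    (f.continuous.comp continuous_neg).integrable_of_hasCompactSupport
      (hfc.comp_homeomorph (Homeomorph.neg X))
  have hmono : (μ K).toReal ≤ ∫ t : X, f (-t) ∂μ := by
    have hind : (∫ t : X, K.indicator (fun _ => (1 : ℝ)) t ∂μ) = (μ K).toReal := by
      rw [integral_indicator_const _ hKc.measurableSet]; simp [measureReal_def]
    rw [← hind]
    refine integral_mono ((integrable_const (1 : ℝ)).indicator hKc.measurableSet) hint1
      fun t => ?_
    by_cases ht : t ∈ K
    · have : f (-t) = 1 := hf1 (Set.neg_mem_neg.mpr ht)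
      simp [ht, this]
    · simp [ht, (hf01 (-t)).1]
  have hval : (multCLM μ hreg) g0 0 = ((∫ t : X, f (-t) ∂μ : ℝ) : ℂ) := by
    show (∫ t : X, g0 (0 - t) ∂μ) = _
    have he : (fun t : X => g0 (0 - t)) = fun t : X => ((f (-t) : ℝ) : ℂ) := by
      funext t
      simp [hg0, zero_sub]
    rw [he]; exact integral_ofReal
  have hle1 : ∫ t : X, f (-t) ∂μ ≤ ‖(multCLM μ hreg) g0 0‖ := by
    rw [hval, Complex.norm_real]
    exact le_abs_self _
  have hle2 : ‖(multCLM μ hreg) g0 0‖ ≤ ‖(multCLM μ hreg) g0‖ := by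
    rw [← ZeroAtInftyContinuousMap.norm_toBCF_eq_norm]
    exact ((multCLM μ hreg) g0).toBCF.norm_coe_le_norm 0
  have hle3 : ‖(multCLM μ hreg) g0‖ ≤ ‖multCLM μ hreg‖ :=
    ((multCLM μ hreg).le_opNorm g0).trans
      (mul_le_of_le_one_right (norm_nonneg _) hg0norm)
  linarith
end

section
/- Let G be a second countable locally compact Hausdorff topological group with left Haar measure λ, and let f, g : G → ℂ be square-integrable with respect to λ (f, g ∈ L²(G)). Then for every x ∈ G the function t ↦ f (x⁻¹ * t) * conj (g t) is integrable, the coefficient function φ(x) = ∫ G, f (x⁻¹ * t) * conj (g t) dλ(t) is continuous on G, tends to 0 at infinity (i.e., tends to 0 along the cocompact filter on G), and satisfies ‖φ(x)‖ ≤ ‖f‖₂ * ‖g‖₂ for all x ∈ G. (This shows coefficients of the left regular representation lie in C₀(G) and that the sup norm is dominated by the A(G)-norm ‖f‖₂‖g‖₂.) -/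
open MeasureTheory Filter Topology
open scoped ENNReal NNReal Pointwise

private lemma cs_aux {α : Type*} [MeasurableSpace α] {μ : Measure α} {u v : α → ℂ}
    (hu : MemLp u 2 μ) (hv : MemLp v 2 μ) :
    Integrable (fun t => u t * (starRingEnd ℂ) (v t)) μ ∧
      ‖∫ t, u t * (starRingEnd ℂ) (v t) ∂μ‖ ≤
        (eLpNorm u 2 μ).toReal * (eLpNorm v 2 μ).toReal := by
  have hUu : (hu.toLp u : α → ℂ) =ᵐ[μ] u := hu.coeFn_toLp
  have hVv : (hv.toLp v : α → ℂ) =ᵐ[μ] v := hv.coeFn_toLp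
  have heq : (fun a => inner (𝕜 := ℂ) ((hv.toLp v : α → ℂ) a) ((hu.toLp u : α → ℂ) a))
      =ᵐ[μ] fun t => u t * (starRingEnd ℂ) (v t) := by
    filter_upwards [hUu, hVv] with a ha hb
    simp only [RCLike.inner_apply, ha, hb]
  have hint : Integrable (fun t => u t * (starRingEnd ℂ) (v t)) μ :=
    (L2.integrable_inner (𝕜 := ℂ) (hv.toLp v) (hu.toLp u)).congr heq
  refine ⟨hint, ?_⟩
  have h1 : ∫ t, u t * (starRingEnd ℂ) (v t) ∂μ = inner (𝕜 := ℂ) (hv.toLp v) (hu.toLp u) := by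
    rw [L2.inner_def]
    exact (integral_congr_ae heq).symm
  rw [h1]
  calc ‖inner (𝕜 := ℂ) (hv.toLp v) (hu.toLp u)‖ ≤ ‖hv.toLp v‖ * ‖hu.toLp u‖ :=
        norm_inner_le_norm _ _
  _ = (eLpNorm u 2 μ).toReal * (eLpNorm v 2 μ).toReal := by
      rw [Lp.norm_toLp, Lp.norm_toLp]; ring

private lemma unif_translate {G : Type*} [Group G] [TopologicalSpace G] [IsTopologicalGroup G]
    (h : G → ℂ) (hc : Continuous h) (hs : HasCompactSupport h) {δ : ℝ} (hδ : 0 < δ) :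
    ∀ᶠ y in 𝓝 (1 : G), ∀ t : G, ‖h (y * t) - h t‖ ≤ δ := by
  letI : UniformSpace G := IsTopologicalGroup.rightUniformSpace G
  have huc : UniformContinuous h := hs.uniformContinuous_of_continuous hc
  have hU : {p : ℂ × ℂ | dist p.1 p.2 < δ} ∈ uniformity ℂ := Metric.dist_mem_uniformity hδ
  have h2 := huc hU
  rw [Filter.mem_map, uniformity_eq_comap_nhds_one' G, Filter.mem_comap] at h2
  obtain ⟨S, hS, hsub⟩ := h2
  filter_upwards [hS] with y hy t
  have hmem : ((t, y * t) : G × G) ∈ (fun p : G × G => p.2 * p.1⁻¹) ⁻¹' S := by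
    simpa [div_eq_mul_inv, mul_inv_cancel_right] using hy
  have h3 := hsub hmem
  simp only [Set.mem_preimage, Set.mem_setOf_eq, dist_eq_norm] at h3
  rw [norm_sub_rev]
  exact h3.le

/-- Coefficients of the left regular representation of a second countable
locally compact group: for `f, g ∈ L²(G)` the coefficient
`φ(x) = ∫ f (x⁻¹ t) conj (g t) dλ(t)` is everywhere defined, continuous,
vanishes at infinity, and is bounded by `‖f‖₂ ‖g‖₂`. -/
theorem regular_representation_coefficient
    {G : Type*} [Group G] [TopologicalSpace G] [IsTopologicalGroup G]
    [LocallyCompactSpace G] [T2Space G] [SecondCountableTopology G]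
    [MeasurableSpace G] [BorelSpace G]
    (lam : Measure G) [lam.IsHaarMeasure]
    (f g : G → ℂ) (hf : MemLp f 2 lam) (hg : MemLp g 2 lam) :
    (∀ x : G, Integrable (fun t : G => f (x⁻¹ * t) * (starRingEnd ℂ) (g t)) lam) ∧
    Continuous (fun x : G => ∫ t : G, f (x⁻¹ * t) * (starRingEnd ℂ) (g t) ∂lam) ∧
    Tendsto (fun x : G => ∫ t : G, f (x⁻¹ * t) * (starRingEnd ℂ) (g t) ∂lam)
      (cocompact G) (nhds 0) ∧
    (∀ x : G, ‖∫ t : G, f (x⁻¹ * t) * (starRingEnd ℂ) (g t) ∂lam‖ ≤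
      (∫ t : G, ‖f t‖ ^ 2 ∂lam) ^ ((1 : ℝ) / 2) *
        (∫ t : G, ‖g t‖ ^ 2 ∂lam) ^ ((1 : ℝ) / 2)) := by
  have two_ne_top : (2 : ℝ≥0∞) ≠ ⊤ := by norm_num
  -- translation preserves MemLp and the L² norm
  have htransL : ∀ (u : G → ℂ), MemLp u 2 lam → ∀ x : G,
      MemLp (fun t => u (x * t)) 2 lam := by
    intro u hu x
    exact hu.comp_measurePreserving (measurePreserving_mul_left lam x)
  have htransE : ∀ (u : G → ℂ), AEStronglyMeasurable u lam → ∀ x : G,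
      eLpNorm (fun t => u (x * t)) 2 lam = eLpNorm u 2 lam := by
    intro u hu x
    exact eLpNorm_comp_measurePreserving hu (measurePreserving_mul_left lam x)
  -- Part 1 : integrability
  have part1 : ∀ x : G, Integrable (fun t : G => f (x⁻¹ * t) * (starRingEnd ℂ) (g t)) lam :=
    fun x => (cs_aux (htransL f hf x⁻¹) hg).1
  -- L² continuity of translation
  have L4 : ∀ (u : G → ℂ), MemLp u 2 lam → ∀ (ε : ℝ≥0∞), ε ≠ 0 →
      ∀ᶠ y in 𝓝 (1 : G), eLpNorm (fun t => u (y * t) - u t) 2 lam ≤ ε := by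
    intro u hu ε hε
    have hε3 : ε / 3 ≠ 0 := by
      simp [ENNReal.div_eq_zero_iff, hε]
    obtain ⟨h, h_supp, h_close, h_cont, h_mem⟩ :=
      hu.exists_hasCompactSupport_eLpNorm_sub_le two_ne_top hε3
    obtain ⟨V, hVcomp, hVmem⟩ := exists_compact_mem_nhds (1 : G)
    set K' : Set G := V⁻¹ * tsupport h with hK'
    have hK'comp : IsCompact K' := hVcomp.inv.mul h_supp
    set C : ℝ≥0∞ := lam K' ^ ((1 : ℝ) / 2) with hC
    have hCne : C ≠ ⊤ :=
      ENNReal.rpow_ne_top_of_nonneg (by norm_num) hK'comp.measure_lt_top.ne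
    have hpos : (0 : ℝ≥0∞) < (ε / 3) / (C + 1) :=
      ENNReal.div_pos hε3 (by finiteness)
    obtain ⟨η, hη0, hηlt⟩ := exists_between hpos
    have hηne : η ≠ ⊤ := (hηlt.trans_le le_top).ne
    set δ : ℝ := η.toReal with hδdef
    have hδpos : 0 < δ := ENNReal.toReal_pos hη0.ne' hηne
    filter_upwards [unif_translate h h_cont h_supp hδpos, hVmem] with y hy hyV
    set A : G → ℂ := (fun t => u (y * t)) - fun t => h (y * t) with hAdef
    set B : G → ℂ := (fun t => h (y * t)) - h with hBdef
    set Cf : G → ℂ := h - u with hCfdef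
    have hdecomp : (fun t => u (y * t) - u t) = A + B + Cf := by
      funext t
      simp only [hAdef, hBdef, hCfdef, Pi.add_apply, Pi.sub_apply]
      ring
    have hA : eLpNorm A 2 lam ≤ ε / 3 := by
      have e1 : eLpNorm (fun t => (u - h) (y * t)) 2 lam = eLpNorm (u - h) 2 lam :=
        htransE (u - h) (hu.aestronglyMeasurable.sub h_mem.aestronglyMeasurable) y
      have e2 : A = fun t => (u - h) (y * t) := by
        funext t; simp [hAdef]
      rw [e2, e1]; exact h_close
    have hCb : eLpNorm Cf 2 lam ≤ ε / 3 := by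
      rw [hCfdef, eLpNorm_sub_comm]; exact h_close
    have hB : eLpNorm B 2 lam ≤ ε / 3 := by
      have hbd : ∀ t, ‖B t‖ ≤ ‖K'.indicator (fun _ => (δ : ℝ)) t‖ := by
        intro t
        by_cases ht : t ∈ K'
        · rw [Set.indicator_of_mem ht]
          simp only [hBdef, Pi.sub_apply, Real.norm_eq_abs, abs_of_pos hδpos]
          exact hy t
        · rw [Set.indicator_of_notMem ht]
          have h1 : h (y * t) = 0 := by
            by_contra hne
            apply ht
            have : y * t ∈ tsupport h := subset_tsupport _ hne
            have hyinv : y⁻¹ ∈ V⁻¹ := Set.inv_mem_inv.mpr hyV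
            have := Set.mul_mem_mul hyinv this
            simpa [mul_assoc] using this
          have h2 : h t = 0 := by
            by_contra hne
            apply ht
            have ht' : t ∈ tsupport h := subset_tsupport _ hne
            have h1V : (1 : G) ∈ V⁻¹ := by
              simpa using mem_of_mem_nhds hVmem
            have := Set.mul_mem_mul h1V ht'
            simpa using this
          simp [hBdef, h1, h2]
      calc eLpNorm B 2 lam ≤ eLpNorm (K'.indicator fun _ => (δ : ℝ)) 2 lam :=
            eLpNorm_mono hbd
        _ ≤ ‖(δ : ℝ)‖₊ * lam K' ^ (1 / (2 : ℝ≥0∞).toReal) := eLpNorm_indicator_const_le _ _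
        _ = η * C := by
            have hδη : (‖(δ : ℝ)‖₊ : ℝ≥0∞) = η := by
              rw [← ENNReal.ofReal_toReal hηne, ← hδdef]
              rw [← enorm_eq_nnnorm, Real.enorm_eq_ofReal hδpos.le]
            rw [hδη, hC]
            norm_num
        _ ≤ (ε / 3) / (C + 1) * (C + 1) := by
            exact mul_le_mul' hηlt.le (le_add_right le_rfl)
        _ = ε / 3 := ENNReal.div_mul_cancel (by simp) (by finiteness)
    rw [hdecomp]
    have aeA : AEStronglyMeasurable A lam :=
      ((htransL u hu y).sub (htransL h h_mem y)).aestronglyMeasurable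
    have aeB : AEStronglyMeasurable B lam :=
      ((htransL h h_mem y).sub h_mem).aestronglyMeasurable
    have aeC : AEStronglyMeasurable Cf lam := (h_mem.sub hu).aestronglyMeasurable
    calc eLpNorm (A + B + Cf) 2 lam
        ≤ eLpNorm (A + B) 2 lam + eLpNorm Cf 2 lam :=
          eLpNorm_add_le (aeA.add aeB) aeC one_le_two
      _ ≤ eLpNorm A 2 lam + eLpNorm B 2 lam + eLpNorm Cf 2 lam :=
          add_le_add_left (eLpNorm_add_le aeA aeB one_le_two) _
      _ ≤ ε / 3 + ε / 3 + ε / 3 := add_le_add (add_le_add hA hB) hCb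
      _ = ε := by
          rw [ENNReal.div_add_div_same, ENNReal.div_add_div_same,
            show ε + ε + ε = ε * 3 by ring, mul_div_assoc,
            ENNReal.div_self (by norm_num) (by norm_num), mul_one]
  -- Part 2 : continuity
  have part2 : Continuous (fun x : G => ∫ t : G, f (x⁻¹ * t) * (starRingEnd ℂ) (g t) ∂lam) := by
    rw [continuous_iff_continuousAt]
    intro x₀
    rw [ContinuousAt, Metric.tendsto_nhds]
    intro ε hε
    set Cg : ℝ := (eLpNorm g 2 lam).toReal with hCg
    have hCg0 : 0 ≤ Cg := ENNReal.toReal_nonneg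
    have hε' : ENNReal.ofReal (ε / (Cg + 1)) ≠ 0 := by
      rw [Ne, ENNReal.ofReal_eq_zero, not_le]
      positivity
    have hmap : Tendsto (fun x : G => x⁻¹ * x₀) (𝓝 x₀) (𝓝 1) := by
      have hcont : Continuous fun x : G => x⁻¹ * x₀ := continuous_inv.mul continuous_const
      have := hcont.tendsto x₀
      simpa using this
    filter_upwards [hmap.eventually (L4 f hf _ hε')] with x hx
    have hmem : MemLp (fun t => f (x⁻¹ * t) - f (x₀⁻¹ * t)) 2 lam :=
      (htransL f hf x⁻¹).sub (htransL f hf x₀⁻¹)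
    have hsub : (∫ t : G, f (x⁻¹ * t) * (starRingEnd ℂ) (g t) ∂lam)
        - (∫ t : G, f (x₀⁻¹ * t) * (starRingEnd ℂ) (g t) ∂lam)
        = ∫ t : G, (f (x⁻¹ * t) - f (x₀⁻¹ * t)) * (starRingEnd ℂ) (g t) ∂lam := by
      rw [← integral_sub (part1 x) (part1 x₀)]
      congr 1; funext t; ring
    have heL : eLpNorm (fun t => f (x⁻¹ * t) - f (x₀⁻¹ * t)) 2 lam
        = eLpNorm (fun t => f ((x⁻¹ * x₀) * t) - f t) 2 lam := by
      have e1 := htransE (fun t => f (x⁻¹ * t) - f (x₀⁻¹ * t))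
        hmem.aestronglyMeasurable x₀
      rw [← e1]
      congr 1
      funext t
      simp [mul_assoc]
    have hb := (cs_aux hmem hg).2
    have hsmall : (eLpNorm (fun t => f (x⁻¹ * t) - f (x₀⁻¹ * t)) 2 lam).toReal
        ≤ ε / (Cg + 1) := by
      rw [heL]
      have h1 := ENNReal.toReal_mono ENNReal.ofReal_ne_top hx
      rwa [ENNReal.toReal_ofReal (by positivity)] at h1
    simp only [dist_eq_norm]
    calc ‖(∫ t : G, f (x⁻¹ * t) * (starRingEnd ℂ) (g t) ∂lam)
          - ∫ t : G, f (x₀⁻¹ * t) * (starRingEnd ℂ) (g t) ∂lam‖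
        = ‖∫ t : G, (f (x⁻¹ * t) - f (x₀⁻¹ * t)) * (starRingEnd ℂ) (g t) ∂lam‖ := by
          rw [hsub]
      _ ≤ (eLpNorm (fun t => f (x⁻¹ * t) - f (x₀⁻¹ * t)) 2 lam).toReal * Cg := hb
      _ ≤ ε / (Cg + 1) * Cg := mul_le_mul_of_nonneg_right hsmall hCg0
      _ < ε := by
          rw [div_mul_eq_mul_div, div_lt_iff₀ (by positivity)]
          nlinarith
  -- Part 3 : vanishing at infinity
  have part3 : Tendsto (fun x : G => ∫ t : G, f (x⁻¹ * t) * (starRingEnd ℂ) (g t) ∂lam)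
      (cocompact G) (nhds 0) := by
    rw [Metric.tendsto_nhds]
    intro ε hε
    set Cg : ℝ := (eLpNorm g 2 lam).toReal with hCg
    have hCg0 : 0 ≤ Cg := ENNReal.toReal_nonneg
    have hεf : ENNReal.ofReal (ε / (3 * (Cg + 1))) ≠ 0 := by
      rw [Ne, ENNReal.ofReal_eq_zero, not_le]; positivity
    obtain ⟨f₀, hf₀supp, hf₀close, hf₀cont, hf₀mem⟩ :=
      hf.exists_hasCompactSupport_eLpNorm_sub_le two_ne_top hεf
    set Cf : ℝ := (eLpNorm f₀ 2 lam).toReal with hCf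
    have hCf0 : 0 ≤ Cf := ENNReal.toReal_nonneg
    have hεg : ENNReal.ofReal (ε / (3 * (Cf + 1))) ≠ 0 := by
      rw [Ne, ENNReal.ofReal_eq_zero, not_le]; positivity
    obtain ⟨g₀, hg₀supp, hg₀close, hg₀cont, hg₀mem⟩ :=
      hg.exists_hasCompactSupport_eLpNorm_sub_le two_ne_top hεg
    have hK₀comp : IsCompact (tsupport g₀ * (tsupport f₀)⁻¹) := hg₀supp.mul hf₀supp.inv
    filter_upwards [hK₀comp.compl_mem_cocompact] with x hx
    rw [Set.mem_compl_iff] at hx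
    simp only [dist_zero_right]
    have hu1 : MemLp (fun t => f (x⁻¹ * t) - f₀ (x⁻¹ * t)) 2 lam :=
      (htransL f hf x⁻¹).sub (htransL f₀ hf₀mem x⁻¹)
    have hint1 : Integrable (fun t => (f (x⁻¹ * t) - f₀ (x⁻¹ * t)) * (starRingEnd ℂ) (g t)) lam :=
      (cs_aux hu1 hg).1
    have hv2 : MemLp (fun t => g t - g₀ t) 2 lam := hg.sub hg₀mem
    have hint2 : Integrable (fun t => f₀ (x⁻¹ * t) * (starRingEnd ℂ) (g t - g₀ t)) lam :=
      (cs_aux (htransL f₀ hf₀mem x⁻¹) hv2).1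
    have hint3 : Integrable (fun t => f₀ (x⁻¹ * t) * (starRingEnd ℂ) (g₀ t)) lam :=
      (cs_aux (htransL f₀ hf₀mem x⁻¹) hg₀mem).1
    have hT3 : (∫ t : G, f₀ (x⁻¹ * t) * (starRingEnd ℂ) (g₀ t) ∂lam) = 0 := by
      have hzero : ∀ t : G, f₀ (x⁻¹ * t) * (starRingEnd ℂ) (g₀ t) = 0 := by
        intro t
        by_cases h1 : g₀ t = 0
        · simp [h1]
        by_cases h2 : f₀ (x⁻¹ * t) = 0
        · simp [h2]
        exfalso
        apply hx
        have ht : t ∈ tsupport g₀ := subset_tsupport _ h1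
        have hft : x⁻¹ * t ∈ tsupport f₀ := subset_tsupport _ h2
        have hxeq : x = t * (x⁻¹ * t)⁻¹ := by group
        rw [hxeq]
        exact Set.mul_mem_mul ht (Set.inv_mem_inv.mpr hft)
      simp only [hzero, integral_zero]
    have h23 : Integrable (fun t => f₀ (x⁻¹ * t) * (starRingEnd ℂ) (g t - g₀ t)
        + f₀ (x⁻¹ * t) * (starRingEnd ℂ) (g₀ t)) lam := hint2.add hint3
    have hdec : (∫ t : G, f (x⁻¹ * t) * (starRingEnd ℂ) (g t) ∂lam)
        = (∫ t : G, (f (x⁻¹ * t) - f₀ (x⁻¹ * t)) * (starRingEnd ℂ) (g t) ∂lam)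
          + (∫ t : G, f₀ (x⁻¹ * t) * (starRingEnd ℂ) (g t - g₀ t) ∂lam)
          + ∫ t : G, f₀ (x⁻¹ * t) * (starRingEnd ℂ) (g₀ t) ∂lam := by
      rw [add_assoc, ← integral_add hint2 hint3, ← integral_add hint1 h23]
      congr 1; funext t
      simp only [map_sub]
      ring
    rw [hdec, hT3, add_zero]
    -- bounds for the two terms
    have hb1 : ‖∫ t : G, (f (x⁻¹ * t) - f₀ (x⁻¹ * t)) * (starRingEnd ℂ) (g t) ∂lam‖
        ≤ ε / (3 * (Cg + 1)) * Cg := by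
      have hcs := (cs_aux hu1 hg).2
      have he1 : eLpNorm (fun t => f (x⁻¹ * t) - f₀ (x⁻¹ * t)) 2 lam
          = eLpNorm (f - f₀) 2 lam := by
        have e1 := htransE (f - f₀)
          (hf.aestronglyMeasurable.sub hf₀mem.aestronglyMeasurable) x⁻¹
        have e2 : (fun t => f (x⁻¹ * t) - f₀ (x⁻¹ * t)) = fun t => (f - f₀) (x⁻¹ * t) := by
          funext t; simp
        rw [e2, e1]
      have hsmall : (eLpNorm (fun t => f (x⁻¹ * t) - f₀ (x⁻¹ * t)) 2 lam).toReal
          ≤ ε / (3 * (Cg + 1)) := by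
        rw [he1]
        have h1 := ENNReal.toReal_mono ENNReal.ofReal_ne_top hf₀close
        rwa [ENNReal.toReal_ofReal (by positivity)] at h1
      exact hcs.trans (mul_le_mul_of_nonneg_right hsmall hCg0)
    have hb2 : ‖∫ t : G, f₀ (x⁻¹ * t) * (starRingEnd ℂ) (g t - g₀ t) ∂lam‖
        ≤ Cf * (ε / (3 * (Cf + 1))) := by
      have hcs := (cs_aux (htransL f₀ hf₀mem x⁻¹) hv2).2
      have he1 : eLpNorm (fun t => f₀ (x⁻¹ * t)) 2 lam = eLpNorm f₀ 2 lam :=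
        htransE f₀ hf₀mem.aestronglyMeasurable x⁻¹
      have hsmall : (eLpNorm (fun t => g t - g₀ t) 2 lam).toReal ≤ ε / (3 * (Cf + 1)) := by
        have h1 := ENNReal.toReal_mono ENNReal.ofReal_ne_top hg₀close
        rwa [ENNReal.toReal_ofReal (by positivity)] at h1
      rw [he1] at hcs
      refine hcs.trans ?_
      exact mul_le_mul_of_nonneg_left hsmall hCf0
    have h1 : ε / (3 * (Cg + 1)) * Cg ≤ ε / 3 := by
      rw [div_mul_eq_mul_div, div_le_div_iff₀ (by positivity) (by norm_num)]
      nlinarith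
    have h2 : Cf * (ε / (3 * (Cf + 1))) ≤ ε / 3 := by
      rw [mul_comm, div_mul_eq_mul_div, div_le_div_iff₀ (by positivity) (by norm_num)]
      nlinarith
    calc ‖(∫ t : G, (f (x⁻¹ * t) - f₀ (x⁻¹ * t)) * (starRingEnd ℂ) (g t) ∂lam)
          + ∫ t : G, f₀ (x⁻¹ * t) * (starRingEnd ℂ) (g t - g₀ t) ∂lam‖
        ≤ ‖∫ t : G, (f (x⁻¹ * t) - f₀ (x⁻¹ * t)) * (starRingEnd ℂ) (g t) ∂lam‖
          + ‖∫ t : G, f₀ (x⁻¹ * t) * (starRingEnd ℂ) (g t - g₀ t) ∂lam‖ := norm_add_le _ _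
      _ ≤ ε / (3 * (Cg + 1)) * Cg + Cf * (ε / (3 * (Cf + 1))) := add_le_add hb1 hb2
      _ ≤ ε / 3 + ε / 3 := add_le_add h1 h2
      _ < ε := by linarith
  -- Part 4 : the norm bound
  have hnorm_eq : ∀ (u : G → ℂ), MemLp u 2 lam →
      (eLpNorm u 2 lam).toReal = (∫ t, ‖u t‖ ^ 2 ∂lam) ^ ((1 : ℝ) / 2) := by
    intro u hu
    rw [hu.eLpNorm_eq_integral_rpow_norm two_ne_zero two_ne_top]
    have h2r : (2 : ℝ≥0∞).toReal = (2 : ℝ) := by simp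
    have hnn : 0 ≤ ∫ t, ‖u t‖ ^ (2 : ℝ≥0∞).toReal ∂lam :=
      integral_nonneg fun t => Real.rpow_nonneg (norm_nonneg _) _
    rw [ENNReal.toReal_ofReal (Real.rpow_nonneg hnn _)]
    rw [h2r]
    congr 1
    · congr 1
      funext t
      rw [show (2 : ℝ) = ((2 : ℕ) : ℝ) by norm_num, Real.rpow_natCast]
    · norm_num
  have part4 : ∀ x : G, ‖∫ t : G, f (x⁻¹ * t) * (starRingEnd ℂ) (g t) ∂lam‖ ≤
      (∫ t : G, ‖f t‖ ^ 2 ∂lam) ^ ((1 : ℝ) / 2) *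
        (∫ t : G, ‖g t‖ ^ 2 ∂lam) ^ ((1 : ℝ) / 2) := by
    intro x
    have hb := (cs_aux (htransL f hf x⁻¹) hg).2
    have heq : eLpNorm (fun t => f (x⁻¹ * t)) 2 lam = eLpNorm f 2 lam :=
      htransE f hf.aestronglyMeasurable x⁻¹
    rw [heq, hnorm_eq f hf, hnorm_eq g hg] at hb
    exact hb
  exact ⟨part1, part2, part3, part4⟩
end

section
/- Let n : ℕ, let H be a complex Hilbert space, and let x, y : Fin n → H. Define the matrix A : Matrix (Fin n) (Fin n) ℂ by A i j = ⟪y i, x j⟫ (inner product conjugate-linear in the first variable). Then for every matrix B : Matrix (Fin n) (Fin n) ℂ, the Schur (Hadamard, entrywise) product A ⊙ B satisfies ‖A ⊙ B‖ ≤ (⨆ i, ‖y i‖) * (⨆ j, ‖x j‖) * ‖B‖, where ‖·‖ denotes the operator norm of a matrix acting on the Euclidean space ℂⁿ (the L²-operator norm). (This is the factorization bound for Schur multipliers underlying the identification of the two norms on B(Rₙ) for the trivial groupoid Rₙ.) -/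
open scoped ComplexConjugate
open Finset


/-- Schur multiplier bound: if `A i j = ⟪y i, x j⟫` is a Gram-type matrix of
vectors in a complex Hilbert space, then for any matrix `B` the Hadamard
(entrywise) product satisfies
`‖A ⊙ B‖ ≤ (sup_i ‖y i‖) (sup_j ‖x j‖) ‖B‖` for the `ℓ²`-operator norm. -/
theorem schur_multiplier_bound (n : ℕ)
    {H : Type*} [NormedAddCommGroup H] [InnerProductSpace ℂ H]
    (x y : Fin n → H) (A : Matrix (Fin n) (Fin n) ℂ)
    (hA : ∀ i j, A i j = (inner ℂ (y i) (x j) : ℂ))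
    (B : Matrix (Fin n) (Fin n) ℂ) :
    ‖Matrix.toEuclideanCLM (𝕜 := ℂ) (Matrix.hadamard A B)‖ ≤
      (⨆ i, ‖y i‖) * (⨆ j, ‖x j‖) * ‖Matrix.toEuclideanCLM (𝕜 := ℂ) B‖ := by
  classical
  set Cy := ⨆ i, ‖y i‖ with hCy
  set Cx := ⨆ j, ‖x j‖ with hCx
  have hCy0 : 0 ≤ Cy := Real.iSup_nonneg fun i => norm_nonneg _
  have hCx0 : 0 ≤ Cx := Real.iSup_nonneg fun j => norm_nonneg _
  have hy_le : ∀ i, ‖y i‖ ≤ Cy := fun i =>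
    le_ciSup (f := fun i => ‖y i‖) (Set.Finite.bddAbove (Set.finite_range _)) i
  have hx_le : ∀ j, ‖x j‖ ≤ Cx := fun j =>
    le_ciSup (f := fun j => ‖x j‖) (Set.Finite.bddAbove (Set.finite_range _)) j
  set nB := ‖Matrix.toEuclideanCLM (𝕜 := ℂ) B‖ with hnB
  have hnB0 : 0 ≤ nB := norm_nonneg _
  -- orthonormal basis of the span
  set K := Submodule.span ℂ (Set.range y ∪ Set.range x) with hK
  haveI : FiniteDimensional ℂ K :=
    FiniteDimensional.span_of_finite ℂ ((Set.finite_range y).union (Set.finite_range x))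
  set m := Module.finrank ℂ K with hm
  let b := stdOrthonormalBasis ℂ K
  let xK : Fin n → K := fun j => ⟨x j, Submodule.subset_span (Or.inr ⟨j, rfl⟩)⟩
  let yK : Fin n → K := fun i => ⟨y i, Submodule.subset_span (Or.inl ⟨i, rfl⟩)⟩
  let a : Fin m → Fin n → ℂ := fun k j => b.repr (xK j) k
  let c : Fin m → Fin n → ℂ := fun k i => b.repr (yK i) k
  have hArep : ∀ i j, A i j = ∑ k, conj (c k i) * a k j := by
    intro i j
    have h1 : (inner ℂ (y i) (x j) : ℂ) = inner ℂ (yK i) (xK j) := rfl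
    rw [hA, h1, ← b.repr.inner_map_map (yK i) (xK j), PiLp.inner_apply]
    simp only [RCLike.inner_apply', a, c]
    rfl
  have hxnorm : ∀ j, ∑ k, ‖a k j‖ ^ 2 = ‖x j‖ ^ 2 := by
    intro j
    have : ‖x j‖ = ‖b.repr (xK j)‖ := by
      rw [LinearIsometryEquiv.norm_map]; rfl
    rw [this, EuclideanSpace.norm_eq, Real.sq_sqrt (by positivity)]
  have hynorm : ∀ i, ∑ k, ‖c k i‖ ^ 2 = ‖y i‖ ^ 2 := by
    intro i
    have : ‖y i‖ = ‖b.repr (yK i)‖ := by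
      rw [LinearIsometryEquiv.norm_map]; rfl
    rw [this, EuclideanSpace.norm_eq, Real.sq_sqrt (by positivity)]
  -- application formula
  have happ : ∀ (M : Matrix (Fin n) (Fin n) ℂ) (u : EuclideanSpace ℂ (Fin n)) (i : Fin n),
      (Matrix.toEuclideanCLM (𝕜 := ℂ) M u) i = ∑ j, M i j * u j := by
    intro M u i; rfl
  set T := Matrix.toEuclideanCLM (𝕜 := ℂ) (Matrix.hadamard A B) with hT
  have key : ∀ u v : EuclideanSpace ℂ (Fin n),
      ‖(inner ℂ v (T u) : ℂ)‖ ≤ Cy * Cx * nB * (‖v‖ * ‖u‖) := by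
    intro u v
    set p : Fin m → EuclideanSpace ℂ (Fin n) :=
      fun k => (WithLp.equiv 2 _).symm (fun i => v i * c k i) with hp
    set q : Fin m → EuclideanSpace ℂ (Fin n) :=
      fun k => (WithLp.equiv 2 _).symm (fun j => u j * a k j) with hq
    have hpk : ∀ k i, p k i = v i * c k i := fun k i => rfl
    have hqk : ∀ k j, q k j = u j * a k j := fun k j => rfl
    have lhs_eq : (inner ℂ v (T u) : ℂ)
        = ∑ k, (inner ℂ (p k) (Matrix.toEuclideanCLM (𝕜 := ℂ) B (q k)) : ℂ) := by
      rw [PiLp.inner_apply]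
      simp only [RCLike.inner_apply', happ, Matrix.hadamard_apply]
      have step : ∀ i : Fin n, conj (v i) * ∑ j, A i j * B i j * u j
          = ∑ j, ∑ k, conj (v i * c k i) * (B i j * (u j * a k j)) := by
        intro i
        rw [Finset.mul_sum]
        refine Finset.sum_congr rfl fun j _ => ?_
        rw [hArep i j, Finset.sum_mul, Finset.sum_mul, Finset.mul_sum]
        refine Finset.sum_congr rfl fun k _ => ?_
        simp only [map_mul]
        ring
      calc (∑ i, conj (v i) * ∑ j, A i j * B i j * u j)
          = ∑ i, ∑ j, ∑ k, conj (v i * c k i) * (B i j * (u j * a k j)) :=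
            Finset.sum_congr rfl fun i _ => step i
        _ = ∑ k, ∑ i, ∑ j, conj (v i * c k i) * (B i j * (u j * a k j)) := by
            have h1 : ∀ i : Fin n, (∑ j, ∑ k, conj (v i * c k i) * (B i j * (u j * a k j)))
                = ∑ k, ∑ j, conj (v i * c k i) * (B i j * (u j * a k j)) := fun i =>
              Finset.sum_comm
            simp only [h1]
            exact Finset.sum_comm
        _ = ∑ k, (inner ℂ (p k) (Matrix.toEuclideanCLM (𝕜 := ℂ) B (q k)) : ℂ) := by
            refine Finset.sum_congr rfl fun k _ => ?_
            rw [PiLp.inner_apply]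
            simp only [RCLike.inner_apply', happ, hpk, hqk, Finset.mul_sum]
    have hnormp : ∑ k, ‖p k‖ ^ 2 ≤ (Cy * ‖v‖) ^ 2 := by
      have e1 : ∀ k, ‖p k‖ ^ 2 = ∑ i, ‖v i‖ ^ 2 * ‖c k i‖ ^ 2 := by
        intro k
        rw [EuclideanSpace.norm_eq, Real.sq_sqrt (by positivity)]
        exact Finset.sum_congr rfl fun i _ => by rw [hpk, norm_mul, mul_pow]
      calc ∑ k, ‖p k‖ ^ 2 = ∑ i, ‖v i‖ ^ 2 * ∑ k, ‖c k i‖ ^ 2 := by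
            simp only [e1, Finset.mul_sum]
            rw [Finset.sum_comm]
        _ = ∑ i, ‖v i‖ ^ 2 * ‖y i‖ ^ 2 := by
            exact Finset.sum_congr rfl fun i _ => by rw [hynorm]
        _ ≤ ∑ i, ‖v i‖ ^ 2 * Cy ^ 2 := by
            refine Finset.sum_le_sum fun i _ => ?_
            exact mul_le_mul_of_nonneg_left
              (pow_le_pow_left₀ (norm_nonneg _) (hy_le i) 2) (by positivity)
        _ = Cy ^ 2 * ∑ i, ‖v i‖ ^ 2 := by rw [← Finset.sum_mul]; ring
        _ = (Cy * ‖v‖) ^ 2 := by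
            rw [EuclideanSpace.norm_eq, mul_pow, Real.sq_sqrt (by positivity)]
    have hnormq : ∑ k, ‖q k‖ ^ 2 ≤ (Cx * ‖u‖) ^ 2 := by
      have e1 : ∀ k, ‖q k‖ ^ 2 = ∑ j, ‖u j‖ ^ 2 * ‖a k j‖ ^ 2 := by
        intro k
        rw [EuclideanSpace.norm_eq, Real.sq_sqrt (by positivity)]
        exact Finset.sum_congr rfl fun j _ => by rw [hqk, norm_mul, mul_pow]
      calc ∑ k, ‖q k‖ ^ 2 = ∑ j, ‖u j‖ ^ 2 * ∑ k, ‖a k j‖ ^ 2 := by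
            simp only [e1, Finset.mul_sum]
            rw [Finset.sum_comm]
        _ = ∑ j, ‖u j‖ ^ 2 * ‖x j‖ ^ 2 := by
            exact Finset.sum_congr rfl fun j _ => by rw [hxnorm]
        _ ≤ ∑ j, ‖u j‖ ^ 2 * Cx ^ 2 := by
            refine Finset.sum_le_sum fun j _ => ?_
            exact mul_le_mul_of_nonneg_left
              (pow_le_pow_left₀ (norm_nonneg _) (hx_le j) 2) (by positivity)
        _ = Cx ^ 2 * ∑ j, ‖u j‖ ^ 2 := by rw [← Finset.sum_mul]; ring
        _ = (Cx * ‖u‖) ^ 2 := by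
            rw [EuclideanSpace.norm_eq, mul_pow, Real.sq_sqrt (by positivity)]
    calc ‖(inner ℂ v (T u) : ℂ)‖
        = ‖∑ k, (inner ℂ (p k) (Matrix.toEuclideanCLM (𝕜 := ℂ) B (q k)) : ℂ)‖ := by
          rw [lhs_eq]
      _ ≤ ∑ k, ‖(inner ℂ (p k) (Matrix.toEuclideanCLM (𝕜 := ℂ) B (q k)) : ℂ)‖ :=
          norm_sum_le _ _
      _ ≤ ∑ k, ‖p k‖ * (nB * ‖q k‖) := by
          refine Finset.sum_le_sum fun k _ => ?_
          refine (norm_inner_le_norm _ _).trans ?_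
          exact mul_le_mul_of_nonneg_left
            ((Matrix.toEuclideanCLM (𝕜 := ℂ) B).le_opNorm (q k)) (norm_nonneg _)
      _ = nB * ∑ k, ‖p k‖ * ‖q k‖ := by
          rw [Finset.mul_sum]; exact Finset.sum_congr rfl fun k _ => by ring
      _ ≤ nB * (Real.sqrt (∑ k, ‖p k‖ ^ 2) * Real.sqrt (∑ k, ‖q k‖ ^ 2)) :=
          mul_le_mul_of_nonneg_left (Real.sum_mul_le_sqrt_mul_sqrt _ _ _) hnB0
      _ ≤ nB * ((Cy * ‖v‖) * (Cx * ‖u‖)) := by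
          refine mul_le_mul_of_nonneg_left ?_ hnB0
          have h1 : Real.sqrt (∑ k, ‖p k‖ ^ 2) ≤ Cy * ‖v‖ := by
            refine Real.sqrt_le_sqrt hnormp |>.trans ?_
            rw [Real.sqrt_sq (by positivity)]
          have h2 : Real.sqrt (∑ k, ‖q k‖ ^ 2) ≤ Cx * ‖u‖ := by
            refine Real.sqrt_le_sqrt hnormq |>.trans ?_
            rw [Real.sqrt_sq (by positivity)]
          exact mul_le_mul h1 h2 (Real.sqrt_nonneg _) (by positivity)
      _ = Cy * Cx * nB * (‖v‖ * ‖u‖) := by ring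
  refine ContinuousLinearMap.opNorm_le_bound _ (by positivity) fun u => ?_
  rcases eq_or_ne ‖T u‖ 0 with h0 | h0
  · rw [h0]; positivity
  · have hpos : 0 < ‖T u‖ := lt_of_le_of_ne (norm_nonneg _) (Ne.symm h0)
    have h1 : ‖(inner ℂ (T u) (T u) : ℂ)‖ = ‖T u‖ * ‖T u‖ := by
      rw [inner_self_eq_norm_sq_to_K]
      rw [norm_pow, RCLike.norm_ofReal, abs_norm, sq]
    have h2 := key u (T u)
    rw [h1] at h2
    have : ‖T u‖ * ‖T u‖ ≤ (Cy * Cx * nB * ‖u‖) * ‖T u‖ := by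
      calc ‖T u‖ * ‖T u‖ ≤ Cy * Cx * nB * (‖T u‖ * ‖u‖) := h2
        _ = (Cy * Cx * nB * ‖u‖) * ‖T u‖ := by ring
    exact le_of_mul_le_mul_right this hpos
end

section
/- Let G be a second countable locally compact Hausdorff topological group with left Haar measure λ, and let φ : G → ℂ be bounded and continuous. Then φ is positive definite (finite-sum sense) if and only if for every continuous compactly supported f : G → ℂ, the iterated integral ∫ G, ∫ G, φ (y⁻¹ * x) * f y * conj (f x) dλ(x) dλ(y) has zero imaginary part and nonnegative real part. (This is the abstract characterization (1) of continuous positive definite functions by integration against C_c(G) test functions.) -/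
open MeasureTheory

open Set Pointwise

/-- A function `φ : G → ℂ` is positive definite if all the finite sums
`∑ i j, conj (c i) * c j * φ ((x i)⁻¹ * (x j))` are real and nonnegative. -/
def IsPositiveDefinite {G : Type*} [Group G] (φ : G → ℂ) : Prop :=
  ∀ (n : ℕ) (x : Fin n → G) (c : Fin n → ℂ),
    (∑ i, ∑ j, (starRingEnd ℂ) (c i) * c j * φ ((x i)⁻¹ * (x j))).im = 0 ∧
    0 ≤ (∑ i, ∑ j, (starRingEnd ℂ) (c i) * c j * φ ((x i)⁻¹ * (x j))).re

/-- Two-sided uniform continuity of a continuous function on a compact set. -/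
lemma aux_two_sided {G : Type*} [Group G] [TopologicalSpace G] [IsTopologicalGroup G]
    (φ : G → ℂ) (hφ : Continuous φ) {L : Set G} (hL : IsCompact L) {ε : ℝ} (hε : 0 < ε) :
    ∃ V : Set G, IsOpen V ∧ (1 : G) ∈ V ∧
      ∀ g ∈ L, ∀ v ∈ V, ∀ w ∈ V, ‖φ (v⁻¹ * g * w) - φ g‖ ≤ ε := by
  classical
  set N : Set (G × (G × G)) := {p | ‖φ (p.2.1⁻¹ * p.1 * p.2.2) - φ p.1‖ < ε} with hN
  have hNopen : IsOpen N := by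
    have hc : Continuous fun p : G × (G × G) => ‖φ (p.2.1⁻¹ * p.1 * p.2.2) - φ p.1‖ := by
      fun_prop
    simpa [hN] using isOpen_lt hc continuous_const
  have hsub : L ×ˢ ({((1 : G), (1 : G))} : Set (G × G)) ⊆ N := by
    rintro ⟨g, v, w⟩ ⟨hg, hvw⟩
    simp only [mem_singleton_iff, Prod.mk.injEq] at hvw
    simp [hN, hvw.1, hvw.2, hε]
  obtain ⟨u, v, hu, hv, hLu, h1v, huv⟩ :=
    generalized_tube_lemma hL isCompact_singleton hNopen hsub
  obtain ⟨V₁, V₂, hV₁, h1, hV₂, h2, hVsub⟩ :=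
    mem_nhds_prod_iff'.1 (hv.mem_nhds (h1v rfl))
  refine ⟨V₁ ∩ V₂, hV₁.inter hV₂, ⟨h1, h2⟩, ?_⟩
  intro g hg a ha b hb
  have : (g, (a, b)) ∈ N := huv ⟨hLu hg, hVsub ⟨ha.1, hb.2⟩⟩
  exact le_of_lt this

set_option maxHeartbeats 1000000 in
/-- Right uniform continuity for compactly supported continuous functions. -/
lemma aux_right_unif {G : Type*} [Group G] [TopologicalSpace G] [IsTopologicalGroup G]
    [LocallyCompactSpace G]
    (f : G → ℂ) (hf : Continuous f) (hfc : HasCompactSupport f) {ε : ℝ} (hε : 0 < ε) :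
    ∃ V : Set G, IsOpen V ∧ (1 : G) ∈ V ∧ ∀ g : G, ∀ v ∈ V, ‖f (g * v) - f g‖ ≤ ε := by
  classical
  obtain ⟨V₀, hV₀c, hV₀n⟩ := exists_compact_mem_nhds (1 : G)
  set K := tsupport f with hK
  set L : Set G := K * V₀⁻¹ with hLdef
  have hLc : IsCompact L := hfc.mul hV₀c.inv
  set N : Set (G × G) := {p | ‖f (p.1 * p.2) - f p.1‖ < ε} with hN
  have hNopen : IsOpen N := by
    have hc : Continuous fun p : G × G => ‖f (p.1 * p.2) - f p.1‖ := by fun_prop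
    simpa [hN] using isOpen_lt hc continuous_const
  have hsub : L ×ˢ ({(1 : G)} : Set G) ⊆ N := by
    rintro ⟨g, v⟩ ⟨hg, hv⟩
    simp only [mem_singleton_iff] at hv
    simp [hN, hv, hε]
  obtain ⟨u, v, hu, hv, hLu, h1v, huv⟩ :=
    generalized_tube_lemma hLc isCompact_singleton hNopen hsub
  refine ⟨v ∩ interior V₀, hv.inter isOpen_interior,
    ⟨h1v rfl, mem_interior_iff_mem_nhds.2 hV₀n⟩, ?_⟩
  intro g w hw
  rcases Classical.em (g ∈ L) with hg | hg
  · have hmem : (g, w) ∈ N := huv ⟨hLu hg, hw.1⟩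
    rw [hN] at hmem
    exact le_of_lt hmem
  · have hg1 : f g = 0 := by
      apply image_eq_zero_of_notMem_tsupport
      intro hgK
      refine hg ?_
      have : g * (1 : G)⁻¹ ∈ K * V₀⁻¹ :=
        Set.mul_mem_mul hgK (Set.inv_mem_inv.2 (mem_of_mem_nhds hV₀n))
      simpa using this
    have hg2 : f (g * w) = 0 := by
      apply image_eq_zero_of_notMem_tsupport
      intro hgK
      refine hg ?_
      have : (g * w) * w⁻¹ ∈ K * V₀⁻¹ :=
        Set.mul_mem_mul hgK (Set.inv_mem_inv.2 (interior_subset hw.2))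
      simpa using this
    simp [hg1, hg2, hε.le]

lemma aux_eps (z : ℂ) (M : ℝ)
    (h : ∀ ε : ℝ, 0 < ε → ∃ w : ℂ, w.im = 0 ∧ 0 ≤ w.re ∧ ‖z - w‖ ≤ ε * M) :
    z.im = 0 ∧ 0 ≤ z.re := by
  have key : ∀ δ : ℝ, 0 < δ → |z.im| ≤ δ ∧ -z.re ≤ δ := by
    intro δ hδ
    have hM1 : 0 < |M| + 1 := by positivity
    obtain ⟨w, hw1, hw2, hw3⟩ := h (δ / (|M| + 1)) (by positivity)
    have hzw : ‖z - w‖ ≤ δ := by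
      refine hw3.trans ?_
      rw [div_mul_eq_mul_div, div_le_iff₀ hM1]
      nlinarith [le_abs_self M, hδ.le]
    constructor
    · have h2 := Complex.abs_im_le_norm (z - w)
      simp only [Complex.sub_im, hw1, sub_zero] at h2
      exact h2.trans hzw
    · have h1 := Complex.abs_re_le_norm (z - w)
      simp only [Complex.sub_re] at h1
      have h3 := neg_abs_le (z.re - w.re)
      linarith
  constructor
  · have h0 : |z.im| ≤ 0 := le_of_forall_pos_le_add (by
      intro ε hε; simpa using (key ε hε).1)
    exact abs_eq_zero.1 (le_antisymm h0 (abs_nonneg _))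
  · have h0 : -z.re ≤ 0 := le_of_forall_pos_le_add (by
      intro ε hε; simpa using (key ε hε).2)
    linarith

/-- bump function supported in V with positive integral -/
lemma aux_bump {G : Type*} [Group G] [TopologicalSpace G] [IsTopologicalGroup G]
    [LocallyCompactSpace G] [T2Space G] [MeasurableSpace G] [BorelSpace G]
    (lam : Measure G) [lam.IsHaarMeasure]
    {V : Set G} (hV : IsOpen V) (h1V : (1 : G) ∈ V) :
    ∃ u : G → ℝ, Continuous u ∧ HasCompactSupport u ∧ (∀ g, 0 ≤ u g) ∧
      (∀ g, g ∉ V → u g = 0) ∧ 0 < ∫ g, u g ∂lam := by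
  obtain ⟨K₀, hK₀n, hK₀V, hK₀c⟩ := local_compact_nhds (hV.mem_nhds h1V)
  obtain ⟨u, hu1, hu0, hucs, huIcc⟩ :=
    exists_continuous_one_zero_of_isCompact hK₀c (isClosed_compl_iff.2 hV)
      (disjoint_compl_right_iff_subset.2 hK₀V)
  refine ⟨u, u.continuous, hucs, fun g => (huIcc g).1, fun g hg => hu0 hg, ?_⟩
  have hint : Integrable u lam := u.continuous.integrable_of_hasCompactSupport hucs
  have h1i : (1 : G) ∈ interior K₀ := mem_interior_iff_mem_nhds.2 hK₀n
  have hpos : 0 < lam (interior K₀) := isOpen_interior.measure_pos lam ⟨1, h1i⟩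
  have hlt : lam (interior K₀) < ⊤ :=
    lt_of_le_of_lt (measure_mono interior_subset) hK₀c.measure_lt_top
  have hconst : ∫ g in interior K₀, u g ∂lam = (lam (interior K₀)).toReal := by
    rw [setIntegral_congr_fun isOpen_interior.measurableSet
      (fun g hg => hu1 (interior_subset hg))]
    simp; rfl
  calc (0 : ℝ) < (lam (interior K₀)).toReal := ENNReal.toReal_pos hpos.ne' hlt.ne
    _ = ∫ g in interior K₀, u g ∂lam := hconst.symm
    _ ≤ ∫ g, u g ∂lam :=
        setIntegral_le_integral hint (Filter.Eventually.of_forall fun g => (huIcc g).1)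

lemma aux_backward
    {G : Type*} [Group G] [TopologicalSpace G] [IsTopologicalGroup G]
    [LocallyCompactSpace G] [T2Space G] [SecondCountableTopology G]
    [MeasurableSpace G] [BorelSpace G]
    (lam : Measure G) [lam.IsHaarMeasure]
    (φ : G → ℂ) (hbd : ∃ C : ℝ, ∀ x : G, ‖φ x‖ ≤ C) (hcont : Continuous φ)
    (hyp : ∀ f : G → ℂ, Continuous f → HasCompactSupport f →
        (∫ y : G, ∫ x : G,
            φ (y⁻¹ * x) * f y * (starRingEnd ℂ) (f x) ∂lam ∂lam).im = 0 ∧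
        0 ≤ (∫ y : G, ∫ x : G,
            φ (y⁻¹ * x) * f y * (starRingEnd ℂ) (f x) ∂lam ∂lam).re)
    (n : ℕ) (x : Fin n → G) (c : Fin n → ℂ) :
    (∑ i, ∑ j, (starRingEnd ℂ) (c i) * c j * φ ((x i)⁻¹ * (x j))).im = 0 ∧
    0 ≤ (∑ i, ∑ j, (starRingEnd ℂ) (c i) * c j * φ ((x i)⁻¹ * (x j))).re := by
  classical
  obtain ⟨C₀, hC₀⟩ := hbd
  set C : ℝ := max C₀ 0 with hCdef
  have hC : ∀ g, ‖φ g‖ ≤ C := fun g => (hC₀ g).trans (le_max_left _ _)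
  have hC0 : 0 ≤ C := le_max_right _ _
  set S : ℂ := ∑ i, ∑ j, (starRingEnd ℂ) (c i) * c j * φ ((x i)⁻¹ * (x j)) with hSdef
  apply aux_eps S ((∑ i, ‖c i‖) ^ 2)
  intro ε hε
  -- compact set of the pairwise quotients
  set L : Set G := Set.range (fun p : Fin n × Fin n => (x p.1)⁻¹ * x p.2) with hLdef
  have hLc : IsCompact L := (Set.finite_range _).isCompact
  obtain ⟨V, hVo, hV1, hVφ⟩ := aux_two_sided φ hcont hLc hε
  obtain ⟨u, huc, hucs, hu0, huV, huT⟩ := aux_bump lam hVo hV1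
  set T : ℝ := ∫ g, u g ∂lam with hTdef
  have huint : Integrable u lam := huc.integrable_of_hasCompactSupport hucs
  have husupp : ∀ g ∈ Function.support u, g ∈ V := by
    intro g hg; by_contra h; exact hg (huV g h)
  -- compact-support facts for translated bumps
  have hUc : ∀ a : G, Continuous fun g => ((u (a * g) : ℝ) : ℂ) := fun a =>
    Complex.continuous_ofReal.comp (huc.comp (continuous_const.mul continuous_id))
  have hUcs : ∀ a : G, HasCompactSupport fun g => ((u (a * g) : ℝ) : ℂ) := by
    intro a
    have h1 : HasCompactSupport fun g => u (a * g) :=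
      hucs.comp_homeomorph (Homeomorph.mulLeft a)
    exact h1.comp_left (g := fun r : ℝ => (r : ℂ)) (by simp)
  -- the test function
  set f : G → ℂ := fun g => ∑ i, (starRingEnd ℂ) (c i) * ((u ((x i)⁻¹ * g) : ℝ) : ℂ)
    with hfdef
  have hfc : Continuous f := by
    apply continuous_finset_sum
    intro i _
    exact continuous_const.mul (hUc _)
  have hfs : HasCompactSupport f := by
    apply HasCompactSupport.intro (K := ⋃ i : Fin n, (fun g => x i * g) '' tsupport u)
      (isCompact_iUnion fun i => hucs.image (Homeomorph.mulLeft (x i)).continuous)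
    intro g hg
    have hterm : ∀ i : Fin n, u ((x i)⁻¹ * g) = 0 := by
      intro i
      apply image_eq_zero_of_notMem_tsupport
      intro hmem
      exact hg (mem_iUnion.2 ⟨i, ⟨(x i)⁻¹ * g, hmem, by simp⟩⟩)
    simp only [hfdef, hterm, Complex.ofReal_zero, mul_zero, Finset.sum_const_zero]
  obtain ⟨hIim, hIre⟩ := hyp f hfc hfs
  set I : ℂ := ∫ y : G, ∫ xx : G,
      φ (y⁻¹ * xx) * f y * (starRingEnd ℂ) (f xx) ∂lam ∂lam with hIdef
  -- the convolution-type auxiliary function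
  set A : Fin n → G → ℂ := fun j y => ∫ xx, φ (y⁻¹ * xx) * ((u ((x j)⁻¹ * xx) : ℝ) : ℂ) ∂lam
    with hAdef
  have hAcont : ∀ j, Continuous (A j) := by
    intro j
    apply continuous_of_dominated (bound := fun xx => C * |u ((x j)⁻¹ * xx)|)
    · intro y
      exact ((hcont.comp (continuous_const.mul continuous_id)).mul (hUc _)).aestronglyMeasurable
    · intro y
      filter_upwards with xx
      rw [norm_mul]
      gcongr
      · exact hC _
      · simp
    · apply Integrable.const_mul
      have habs : Continuous fun xx => |u ((x j)⁻¹ * xx)| :=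
        (huc.comp (continuous_const.mul continuous_id)).abs
      apply habs.integrable_of_hasCompactSupport
      exact (hucs.comp_homeomorph (Homeomorph.mulLeft ((x j)⁻¹))).comp_left (g := abs) abs_zero
    · filter_upwards with xx
      exact (hcont.comp ((continuous_id.inv).mul continuous_const)).mul continuous_const
  have hAbd : ∀ j y, ‖A j y‖ ≤ C * ∫ xx, |u xx| ∂lam := by
    intro j y
    rw [hAdef]
    calc ‖∫ xx, φ (y⁻¹ * xx) * ((u ((x j)⁻¹ * xx) : ℝ) : ℂ) ∂lam‖
        ≤ ∫ xx, C * |u ((x j)⁻¹ * xx)| ∂lam := by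
          apply norm_integral_le_of_norm_le
          · apply Integrable.const_mul
            have habs : Continuous fun xx => |u ((x j)⁻¹ * xx)| :=
              (huc.comp (continuous_const.mul continuous_id)).abs
            apply habs.integrable_of_hasCompactSupport
            exact (hucs.comp_homeomorph
              (Homeomorph.mulLeft ((x j)⁻¹))).comp_left (g := abs) abs_zero
          · filter_upwards with xx
            rw [norm_mul]
            gcongr
            · exact hC _
            · simp
      _ = C * ∫ xx, |u ((x j)⁻¹ * xx)| ∂lam := integral_const_mul _ _
      _ = C * ∫ xx, |u xx| ∂lam := by
          congr 1
          exact integral_mul_left_eq_self (fun xx => |u xx|) ((x j)⁻¹)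
  -- cast bump facts
  have hucast_int : Integrable (fun y => ((u y : ℝ) : ℂ)) lam := huint.ofReal
  have hucastc : Continuous fun y => ((u y : ℝ) : ℂ) :=
    Complex.continuous_ofReal.comp huc
  have hucastcs : HasCompactSupport fun y => ((u y : ℝ) : ℂ) :=
    hucs.comp_left (g := fun r : ℝ => (r : ℂ)) (by simp)
  have hTc : (∫ y, ((u y : ℝ) : ℂ) ∂lam) = ((T : ℝ) : ℂ) := by
    rw [hTdef]; exact integral_ofReal
  -- expansion of the conjugate
  have hconjf : ∀ g : G, (starRingEnd ℂ) (f g) = ∑ j, c j * ((u ((x j)⁻¹ * g) : ℝ) : ℂ) := by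
    intro g
    simp [hfdef, map_sum, map_mul, Complex.conj_conj, Complex.conj_ofReal]
  have hbase : ∀ (j : Fin n) (y : G),
      Integrable (fun xx => φ (y⁻¹ * xx) * ((u ((x j)⁻¹ * xx) : ℝ) : ℂ)) lam := by
    intro j y
    apply Continuous.integrable_of_hasCompactSupport
    · exact (hcont.comp (continuous_const.mul continuous_id)).mul (hUc _)
    · exact HasCompactSupport.mul_left (hUcs _)
  have hInner : ∀ y : G, (∫ xx, φ (y⁻¹ * xx) * f y * (starRingEnd ℂ) (f xx) ∂lam)
      = ∑ j, f y * (c j * A j y) := by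
    intro y
    have h1 : (fun xx => φ (y⁻¹ * xx) * f y * (starRingEnd ℂ) (f xx))
        = fun xx => ∑ j, (f y * c j) * (φ (y⁻¹ * xx) * ((u ((x j)⁻¹ * xx) : ℝ) : ℂ)) := by
      funext xx
      rw [hconjf xx, Finset.mul_sum]
      exact Finset.sum_congr rfl fun j _ => by ring
    rw [h1, integral_finset_sum]
    · refine Finset.sum_congr rfl fun j _ => ?_
      rw [integral_const_mul]
      simp only [hAdef]
      ring
    · exact fun j _ => (hbase j y).const_mul _
  have hfAint : ∀ j : Fin n, Integrable (fun y => f y * (c j * A j y)) lam := by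
    intro j
    apply Continuous.integrable_of_hasCompactSupport
    · exact hfc.mul (continuous_const.mul (hAcont j))
    · exact hfs.mul_right
  have hI1 : I = ∑ j, ∫ y, f y * (c j * A j y) ∂lam := by
    rw [hIdef]
    rw [show (fun y => ∫ xx, φ (y⁻¹ * xx) * f y * (starRingEnd ℂ) (f xx) ∂lam)
        = fun y => ∑ j, f y * (c j * A j y) from funext hInner]
    exact integral_finset_sum _ fun j _ => hfAint j
  have hI2 : ∀ j : Fin n, (∫ y, f y * (c j * A j y) ∂lam)
      = ∑ i, (starRingEnd ℂ) (c i) * c j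
          * ∫ y, ((u ((x i)⁻¹ * y) : ℝ) : ℂ) * A j y ∂lam := by
    intro j
    have h1 : (fun y => f y * (c j * A j y))
        = fun y => ∑ i, ((starRingEnd ℂ) (c i) * c j)
            * (((u ((x i)⁻¹ * y) : ℝ) : ℂ) * A j y) := by
      funext y
      simp only [hfdef]
      rw [Finset.sum_mul]
      exact Finset.sum_congr rfl fun i _ => by ring
    rw [h1, integral_finset_sum]
    · exact Finset.sum_congr rfl fun i _ => integral_const_mul _ _
    · intro i _
      apply Integrable.const_mul
      apply Continuous.integrable_of_hasCompactSupport
      · exact (hUc _).mul (hAcont j)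
      · exact HasCompactSupport.mul_right (hUcs _)
  -- change of variables
  have hA_shift : ∀ (j : Fin n) (a y : G),
      A j (a * y) = ∫ xx, φ ((a * y)⁻¹ * (x j * xx)) * ((u xx : ℝ) : ℂ) ∂lam := by
    intro j a y
    have h := integral_mul_left_eq_self (μ := lam)
      (fun xx => φ ((a * y)⁻¹ * xx) * ((u ((x j)⁻¹ * xx) : ℝ) : ℂ)) (x j)
    simp only [hAdef]
    rw [← h]
    simp only [inv_mul_cancel_left]
  set B : Fin n → Fin n → G → ℂ := fun i j y =>
      ∫ xx, φ (y⁻¹ * ((x i)⁻¹ * x j) * xx) * ((u xx : ℝ) : ℂ) ∂lam with hBdef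
  have hAB : ∀ (i j : Fin n) (y : G), A j (x i * y) = B i j y := by
    intro i j y
    rw [hA_shift j (x i) y]
    simp only [hBdef]
    congr 1
    funext xx
    congr 2
    group
  set K : Fin n → Fin n → ℂ := fun i j => ∫ y, ((u y : ℝ) : ℂ) * B i j y ∂lam with hKdef
  have hOuter : ∀ i j : Fin n,
      (∫ y, ((u ((x i)⁻¹ * y) : ℝ) : ℂ) * A j y ∂lam) = K i j := by
    intro i j
    have h := integral_mul_left_eq_self (μ := lam)
      (fun y => ((u ((x i)⁻¹ * y) : ℝ) : ℂ) * A j y) (x i)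
    rw [← h]
    simp only [hKdef, inv_mul_cancel_left]
    congr 1
    funext y
    rw [hAB i j y]
  have hIK : I = ∑ i, ∑ j, (starRingEnd ℂ) (c i) * c j * K i j := by
    calc I = ∑ j, ∑ i, (starRingEnd ℂ) (c i) * c j
        * ∫ y, ((u ((x i)⁻¹ * y) : ℝ) : ℂ) * A j y ∂lam := by
          rw [hI1]; exact Finset.sum_congr rfl fun j _ => hI2 j
      _ = ∑ j, ∑ i, (starRingEnd ℂ) (c i) * c j * K i j := by
          refine Finset.sum_congr rfl fun j _ => Finset.sum_congr rfl fun i _ => ?_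
          rw [hOuter i j]
      _ = ∑ i, ∑ j, (starRingEnd ℂ) (c i) * c j * K i j := Finset.sum_comm
  -- continuity of B
  have hBcont : ∀ i j : Fin n, Continuous (B i j) := by
    intro i j
    have : B i j = fun y => A j (x i * y) := by
      funext y; rw [← hAB i j y]
    rw [this]
    exact (hAcont j).comp (continuous_const.mul continuous_id)
  -- pointwise bound on B
  have hBy : ∀ (i j : Fin n) (y : G), y ∈ V →
      ‖B i j y - φ ((x i)⁻¹ * x j) * ((T : ℝ) : ℂ)‖ ≤ ε * T := by
    intro i j y hyV
    set g : G := (x i)⁻¹ * x j with hgdef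
    have hgL : g ∈ L := ⟨(i, j), rfl⟩
    have hint1 : Integrable (fun xx => φ (y⁻¹ * g * xx) * ((u xx : ℝ) : ℂ)) lam := by
      apply Continuous.integrable_of_hasCompactSupport
      · exact (hcont.comp (continuous_const.mul continuous_id)).mul hucastc
      · exact HasCompactSupport.mul_left hucastcs
    have hdiff : B i j y - φ g * ((T : ℝ) : ℂ)
        = ∫ xx, (φ (y⁻¹ * g * xx) - φ g) * ((u xx : ℝ) : ℂ) ∂lam := by
      have h2 : φ g * ((T : ℝ) : ℂ) = ∫ xx, φ g * ((u xx : ℝ) : ℂ) ∂lam := by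
        rw [integral_const_mul, hTc]
      rw [h2]
      simp only [hBdef]
      rw [← integral_sub hint1 (hucast_int.const_mul (φ g))]
      congr 1
      funext xx
      ring
    rw [hdiff]
    have hb : ‖∫ xx, (φ (y⁻¹ * g * xx) - φ g) * ((u xx : ℝ) : ℂ) ∂lam‖
        ≤ ∫ xx, ε * u xx ∂lam := by
      apply norm_integral_le_of_norm_le (huint.const_mul ε)
      filter_upwards with xx
      by_cases hxx : u xx = 0
      · simp [hxx]
      · have hxxV : xx ∈ V := husupp xx hxx
        rw [norm_mul, Complex.norm_real]
        rw [Real.norm_eq_abs, abs_of_nonneg (hu0 xx)]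
        exact mul_le_mul_of_nonneg_right (hVφ g hgL y hyV xx hxxV) (hu0 xx)
    calc ‖∫ xx, (φ (y⁻¹ * g * xx) - φ g) * ((u xx : ℝ) : ℂ) ∂lam‖
        ≤ ∫ xx, ε * u xx ∂lam := hb
      _ = ε * T := by rw [integral_const_mul, hTdef]
  -- bound on K
  have hKb : ∀ i j : Fin n,
      ‖φ ((x i)⁻¹ * x j) * ((T : ℝ) : ℂ) ^ 2 - K i j‖ ≤ ε * T ^ 2 := by
    intro i j
    set g : G := (x i)⁻¹ * x j with hgdef
    have hint1 : Integrable (fun y => ((u y : ℝ) : ℂ) * B i j y) lam := by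
      apply Continuous.integrable_of_hasCompactSupport
      · exact hucastc.mul (hBcont i j)
      · exact HasCompactSupport.mul_right hucastcs
    have hdiff : K i j - φ g * ((T : ℝ) : ℂ) ^ 2
        = ∫ y, ((u y : ℝ) : ℂ) * (B i j y - φ g * ((T : ℝ) : ℂ)) ∂lam := by
      have h2 : φ g * ((T : ℝ) : ℂ) ^ 2
          = ∫ y, ((u y : ℝ) : ℂ) * (φ g * ((T : ℝ) : ℂ)) ∂lam := by
        rw [integral_mul_const, hTc]
        ring
      rw [h2]
      simp only [hKdef]
      rw [← integral_sub hint1 (hucast_int.mul_const (φ g * ((T : ℝ) : ℂ)))]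
      congr 1
      funext y
      ring
    have hb : ‖K i j - φ g * ((T : ℝ) : ℂ) ^ 2‖ ≤ ε * T ^ 2 := by
      rw [hdiff]
      have h3 : ‖∫ y, ((u y : ℝ) : ℂ) * (B i j y - φ g * ((T : ℝ) : ℂ)) ∂lam‖
          ≤ ∫ y, (ε * T) * u y ∂lam := by
        apply norm_integral_le_of_norm_le (huint.const_mul (ε * T))
        filter_upwards with y
        by_cases hy : u y = 0
        · simp [hy]
        · have hyV : y ∈ V := husupp y hy
          rw [norm_mul, Complex.norm_real, Real.norm_eq_abs, abs_of_nonneg (hu0 y)]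
          calc u y * ‖B i j y - φ g * ((T : ℝ) : ℂ)‖ ≤ u y * (ε * T) :=
              mul_le_mul_of_nonneg_left (hBy i j y hyV) (hu0 y)
            _ = ε * T * u y := by ring
      calc ‖∫ y, ((u y : ℝ) : ℂ) * (B i j y - φ g * ((T : ℝ) : ℂ)) ∂lam‖
          ≤ ∫ y, (ε * T) * u y ∂lam := h3
        _ = ε * T * T := by rw [integral_const_mul, hTdef]
        _ = ε * T ^ 2 := by ring
    calc ‖φ g * ((T : ℝ) : ℂ) ^ 2 - K i j‖
        = ‖K i j - φ g * ((T : ℝ) : ℂ) ^ 2‖ := norm_sub_rev _ _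
      _ ≤ ε * T ^ 2 := hb
  -- assemble
  have hST : ‖S * ((T : ℝ) : ℂ) ^ 2 - I‖ ≤ ε * (∑ i, ‖c i‖) ^ 2 * T ^ 2 := by
    have h1 : S * ((T : ℝ) : ℂ) ^ 2 - I
        = ∑ i, ∑ j, (starRingEnd ℂ) (c i) * c j
            * (φ ((x i)⁻¹ * x j) * ((T : ℝ) : ℂ) ^ 2 - K i j) := by
      rw [hIK, hSdef, Finset.sum_mul, ← Finset.sum_sub_distrib]
      refine Finset.sum_congr rfl fun i _ => ?_
      rw [Finset.sum_mul, ← Finset.sum_sub_distrib]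
      exact Finset.sum_congr rfl fun j _ => by ring
    rw [h1]
    calc ‖∑ i, ∑ j, (starRingEnd ℂ) (c i) * c j
            * (φ ((x i)⁻¹ * x j) * ((T : ℝ) : ℂ) ^ 2 - K i j)‖
        ≤ ∑ i, ∑ j, ‖c i‖ * ‖c j‖ * (ε * T ^ 2) := by
          refine (norm_sum_le _ _).trans (Finset.sum_le_sum fun i _ => ?_)
          refine (norm_sum_le _ _).trans (Finset.sum_le_sum fun j _ => ?_)
          rw [norm_mul, norm_mul, RCLike.norm_conj]
          exact mul_le_mul_of_nonneg_left (hKb i j)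
            (mul_nonneg (norm_nonneg _) (norm_nonneg _))
      _ = ε * (∑ i, ‖c i‖) ^ 2 * T ^ 2 := by
          have h2 : (∑ i : Fin n, ‖c i‖) ^ 2 = ∑ i : Fin n, ∑ j : Fin n, ‖c i‖ * ‖c j‖ := by
            rw [sq, Finset.sum_mul_sum]
          rw [h2]
          simp only [Finset.mul_sum, Finset.sum_mul]
          exact Finset.sum_congr rfl fun i _ => Finset.sum_congr rfl fun j _ => by ring
  -- produce the witness
  have hT2 : (0 : ℝ) < T ^ 2 := by positivity
  have hT2c : ((T : ℝ) : ℂ) ^ 2 ≠ 0 := pow_ne_zero 2 (Complex.ofReal_ne_zero.2 huT.ne')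
  refine ⟨((I.re / T ^ 2 : ℝ) : ℂ), Complex.ofReal_im _, ?_, ?_⟩
  · rw [Complex.ofReal_re]
    exact div_nonneg hIre hT2.le
  have hIval : I = ((I.re : ℝ) : ℂ) := Complex.ext (by simp) (by simp [hIim])
  have hw : S - ((I.re / T ^ 2 : ℝ) : ℂ) = (S * ((T : ℝ) : ℂ) ^ 2 - I) / ((T : ℝ) : ℂ) ^ 2 := by
    rw [eq_div_iff hT2c]
    rw [sub_mul]
    congr 1
    conv_rhs => rw [hIval]
    push_cast
    rw [div_mul_cancel₀ _ hT2c]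
  rw [hw, norm_div]
  have hnorm : ‖((T : ℝ) : ℂ) ^ 2‖ = T ^ 2 := by
    rw [norm_pow, Complex.norm_real, Real.norm_eq_abs, abs_of_nonneg huT.le]
  rw [hnorm, div_le_iff₀ hT2]
  exact hST

set_option maxHeartbeats 1000000 in
lemma aux_forward
    {G : Type*} [Group G] [TopologicalSpace G] [IsTopologicalGroup G]
    [LocallyCompactSpace G] [T2Space G] [SecondCountableTopology G]
    [MeasurableSpace G] [BorelSpace G]
    (lam : Measure G) [lam.IsHaarMeasure]
    (φ : G → ℂ) (hbd : ∃ C : ℝ, ∀ x : G, ‖φ x‖ ≤ C) (hcont : Continuous φ)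
    (hPD : ∀ (n : ℕ) (x : Fin n → G) (c : Fin n → ℂ),
      (∑ i, ∑ j, (starRingEnd ℂ) (c i) * c j * φ ((x i)⁻¹ * (x j))).im = 0 ∧
      0 ≤ (∑ i, ∑ j, (starRingEnd ℂ) (c i) * c j * φ ((x i)⁻¹ * (x j))).re)
    (f : G → ℂ) (hf : Continuous f) (hfs : HasCompactSupport f) :
    (∫ y : G, ∫ x : G, φ (y⁻¹ * x) * f y * (starRingEnd ℂ) (f x) ∂lam ∂lam).im = 0 ∧
    0 ≤ (∫ y : G, ∫ x : G, φ (y⁻¹ * x) * f y * (starRingEnd ℂ) (f x) ∂lam ∂lam).re := by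
  classical
  obtain ⟨C₀, hC₀⟩ := hbd
  set C : ℝ := max C₀ 0 with hCdef
  have hC : ∀ g, ‖φ g‖ ≤ C := fun g => (hC₀ g).trans (le_max_left _ _)
  have hC0 : 0 ≤ C := le_max_right _ _
  set K : Set G := tsupport f with hKdef
  have hK : IsCompact K := hfs
  have hKm : MeasurableSet K := (isClosed_tsupport f).measurableSet
  -- bound on f
  obtain ⟨x₀, hx₀⟩ := hf.norm.exists_forall_ge_of_hasCompactSupport hfs.norm
  set Cf : ℝ := ‖f x₀‖ with hCfdef
  have hCf : ∀ g, ‖f g‖ ≤ Cf := hx₀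
  have hCf0 : 0 ≤ Cf := norm_nonneg _
  set M₁ : ℝ := Cf * Cf + C * Cf + C * Cf with hM₁def
  have hM₁0 : 0 ≤ M₁ := by positivity
  set z : ℂ := ∫ y : G, ∫ x : G, φ (y⁻¹ * x) * f y * (starRingEnd ℂ) (f x) ∂lam ∂lam
    with hzdef
  apply aux_eps z (M₁ * ((lam K).toReal * (lam K).toReal))
  intro ε hε
  -- choose the neighborhood V
  have hLc : IsCompact (K⁻¹ * K) := hK.inv.mul hK
  obtain ⟨V₁, hV₁o, hV₁1, hVφ⟩ := aux_two_sided φ hcont hLc hε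
  obtain ⟨V₂, hV₂o, hV₂1, hVf⟩ := aux_right_unif f hf hfs hε
  set V : Set G := V₁ ∩ V₂ with hVdef
  have hVo : IsOpen V := hV₁o.inter hV₂o
  have hV1 : (1 : G) ∈ V := ⟨hV₁1, hV₂1⟩
  -- finite subcover
  obtain ⟨t, ht1, ht2⟩ := hK.elim_nhds_subcover (fun a => a • V) (fun a _ =>
    (hVo.smul a).mem_nhds ⟨1, hV1, mul_one a⟩)
  set l : List G := t.toList with hldef
  set n : ℕ := l.length with hndef
  set pts : ℕ → G := fun i => l.getD i 1 with hptsdef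
  have hpts_mem : ∀ i, i < n → pts i ∈ K := by
    intro i hi
    have h1 : pts i = l[i] := List.getD_eq_getElem l 1 hi
    have h2 : l[i] ∈ l := List.getElem_mem hi
    rw [h1]
    exact ht1 _ (Finset.mem_toList.1 h2)
  have hcover : ∀ g ∈ K, ∃ i, i < n ∧ g ∈ pts i • V := by
    intro g hg
    obtain ⟨a, ha, hga⟩ := mem_iUnion₂.1 (ht2 hg)
    obtain ⟨i, hi, rfl⟩ := List.mem_iff_getElem.1 (Finset.mem_toList.2 ha)
    exact ⟨i, hi, by
      have : pts i = l[i] := List.getD_eq_getElem l 1 hi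
      rwa [this]⟩
  -- the disjointified partition
  set Fs : ℕ → Set G := fun i => if i < n then K ∩ pts i • V else ∅ with hFsdef
  have hFsm : ∀ i, MeasurableSet (Fs i) := by
    intro i
    simp only [hFsdef]
    split
    · exact hKm.inter (hVo.smul _).measurableSet
    · exact MeasurableSet.empty
  have hFsK : ∀ i, Fs i ⊆ K := by
    intro i
    simp only [hFsdef]
    split
    · exact inter_subset_left
    · exact empty_subset _
  set D : ℕ → Set G := disjointed Fs with hDdef
  have hDm : ∀ i, MeasurableSet (D i) := fun i => MeasurableSet.disjointed hFsm i
  have hDF : ∀ i, D i ⊆ Fs i := fun i => disjointed_le Fs i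
  have hDK : ∀ i, D i ⊆ K := fun i => (hDF i).trans (hFsK i)
  have hDV : ∀ i, i < n → D i ⊆ pts i • V := by
    intro i hi
    refine (hDF i).trans ?_
    simp only [hFsdef, if_pos hi]
    exact inter_subset_right
  have hDdisj : Pairwise (Function.onFun Disjoint D) := disjoint_disjointed Fs
  have hDempty : ∀ i, n ≤ i → D i = ∅ := by
    intro i hi
    have : Fs i = ∅ := by simp [hFsdef, Nat.not_lt.2 hi]
    exact eq_empty_of_subset_empty (this ▸ hDF i)
  have hKeq : ⋃ i ∈ Finset.range n, D i = K := by
    have h1 : ⋃ i, D i = ⋃ i, Fs i := iUnion_disjointed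
    have h2 : ⋃ i, Fs i = K := by
      apply subset_antisymm (iUnion_subset hFsK)
      intro g hg
      obtain ⟨i, hi, hgi⟩ := hcover g hg
      exact mem_iUnion.2 ⟨i, by simp [hFsdef, if_pos hi, hg, hgi]⟩
    have h3 : ⋃ i ∈ Finset.range n, D i = ⋃ i, D i := by
      apply subset_antisymm (iUnion₂_subset fun i _ => subset_iUnion D i)
      intro g hg
      obtain ⟨i, hgi⟩ := mem_iUnion.1 hg
      rcases lt_or_ge i n with h | h
      · exact mem_iUnion₂.2 ⟨i, Finset.mem_range.2 h, hgi⟩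
      · exact absurd hgi (by simp [hDempty i h])
    rw [h3, h1, h2]
  have hDfin : ∀ i, lam (D i) ≠ ⊤ :=
    fun i => ((measure_mono (hDK i)).trans_lt hK.measure_lt_top).ne
  have hDpair : (↑(Finset.range n) : Set ℕ).Pairwise (Function.onFun Disjoint D) :=
    hDdisj.set_pairwise _
  have hsum_meas : ∑ i ∈ Finset.range n, (lam (D i)).toReal = (lam K).toReal := by
    rw [← ENNReal.toReal_sum (fun i _ => hDfin i),
      ← measure_biUnion_finset hDpair (fun i _ => hDm i), hKeq]
  -- integrability of the inner integrand
  have hconjc : Continuous fun xx => (starRingEnd ℂ) (f xx) := continuous_star.comp hf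
  have hconjcs : HasCompactSupport fun xx => (starRingEnd ℂ) (f xx) :=
    hfs.comp_left (g := (starRingEnd ℂ)) (map_zero _)
  have hFyint : ∀ y : G,
      Integrable (fun xx => φ (y⁻¹ * xx) * f y * (starRingEnd ℂ) (f xx)) lam := by
    intro y
    apply Continuous.integrable_of_hasCompactSupport
    · exact ((hcont.comp (continuous_const.mul continuous_id)).mul continuous_const).mul hconjc
    · exact HasCompactSupport.mul_left hconjcs
  -- the partial convolution
  set H : ℕ → G → ℂ := fun j y => ∫ xx in D j, φ (y⁻¹ * xx) * (starRingEnd ℂ) (f xx) ∂lam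
    with hHdef
  have hnorm_int : Integrable (fun xx => C * ‖f xx‖) lam :=
    (hf.norm.integrable_of_hasCompactSupport hfs.norm).const_mul C
  have hHcont : ∀ j, Continuous (H j) := by
    intro j
    apply continuous_of_dominated (bound := fun xx => C * ‖f xx‖)
    · intro y
      exact ((hcont.comp (continuous_const.mul continuous_id)).mul
        hconjc).aestronglyMeasurable
    · intro y
      filter_upwards with xx
      rw [norm_mul, RCLike.norm_conj]
      exact mul_le_mul_of_nonneg_right (hC _) (norm_nonneg _)
    · exact hnorm_int.restrict
    · filter_upwards with xx
      exact (hcont.comp ((continuous_id.inv).mul continuous_const)).mul continuous_const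
  have hInner1 : ∀ (j : ℕ) (y : G),
      (∫ xx in D j, φ (y⁻¹ * xx) * f y * (starRingEnd ℂ) (f xx) ∂lam) = f y * H j y := by
    intro j y
    have h1 : (fun xx => φ (y⁻¹ * xx) * f y * (starRingEnd ℂ) (f xx))
        = fun xx => f y * (φ (y⁻¹ * xx) * (starRingEnd ℂ) (f xx)) := by
      funext xx; ring
    rw [h1, integral_const_mul]
  have hInnerSum : ∀ y : G,
      (∫ xx, φ (y⁻¹ * xx) * f y * (starRingEnd ℂ) (f xx) ∂lam)
      = ∑ j ∈ Finset.range n, f y * H j y := by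
    intro y
    rw [← setIntegral_eq_integral_of_forall_compl_eq_zero
      (s := K) (fun xx hxx => by
        have : f xx = 0 := image_eq_zero_of_notMem_tsupport hxx
        simp [this])]
    rw [← hKeq, integral_biUnion_finset (Finset.range n) (fun i _ => hDm i) hDpair
      (fun i _ => (hFyint y).integrableOn)]
    exact Finset.sum_congr rfl fun j _ => hInner1 j y
  have hfHint : ∀ j, Integrable (fun y => f y * H j y) lam := by
    intro j
    apply Continuous.integrable_of_hasCompactSupport
    · exact hf.mul (hHcont j)
    · exact hfs.mul_right
  have hzsum : z = ∑ j ∈ Finset.range n, ∑ i ∈ Finset.range n,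
      ∫ y in D i, f y * H j y ∂lam := by
    rw [hzdef]
    rw [show (fun y => ∫ xx, φ (y⁻¹ * xx) * f y * (starRingEnd ℂ) (f xx) ∂lam)
      = fun y => ∑ j ∈ Finset.range n, f y * H j y from funext hInnerSum]
    rw [integral_finset_sum _ (fun j _ => hfHint j)]
    refine Finset.sum_congr rfl fun j _ => ?_
    rw [← setIntegral_eq_integral_of_forall_compl_eq_zero
      (s := K) (fun y hy => by
        have : f y = 0 := image_eq_zero_of_notMem_tsupport hy
        simp [this])]
    rw [← hKeq, integral_biUnion_finset (Finset.range n) (fun i _ => hDm i) hDpair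
      (fun i _ => (hfHint j).integrableOn)]
  -- the model values
  set Φ0 : ℕ → ℕ → ℂ := fun i j =>
    φ ((pts i)⁻¹ * pts j) * f (pts i) * (starRingEnd ℂ) (f (pts j)) with hΦ0def
  -- pointwise estimate
  have hPoint : ∀ i j : ℕ, i < n → j < n → ∀ y ∈ D i, ∀ xx ∈ D j,
      ‖φ (y⁻¹ * xx) * f y * (starRingEnd ℂ) (f xx) - Φ0 i j‖ ≤ ε * M₁ := by
    intro i j hi hj y hy xx hxx
    set p : G := pts i with hpdef
    set q : G := pts j with hqdef
    have hv : p⁻¹ * y ∈ V := by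
      have := mem_smul_set_iff_inv_smul_mem.1 (hDV i hi hy)
      simpa [smul_eq_mul] using this
    have hw : q⁻¹ * xx ∈ V := by
      have := mem_smul_set_iff_inv_smul_mem.1 (hDV j hj hxx)
      simpa [smul_eq_mul] using this
    have hfy : ‖f y - f p‖ ≤ ε := by
      have := hVf p (p⁻¹ * y) hv.2
      rwa [mul_inv_cancel_left] at this
    have hfx : ‖f xx - f q‖ ≤ ε := by
      have := hVf q (q⁻¹ * xx) hw.2
      rwa [mul_inv_cancel_left] at this
    have hgL : p⁻¹ * q ∈ K⁻¹ * K :=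
      Set.mul_mem_mul (Set.inv_mem_inv.2 (hpts_mem i hi)) (hpts_mem j hj)
    have hφb : ‖φ (y⁻¹ * xx) - φ (p⁻¹ * q)‖ ≤ ε := by
      have h := hVφ (p⁻¹ * q) hgL (p⁻¹ * y) hv.1 (q⁻¹ * xx) hw.1
      have harg : (p⁻¹ * y)⁻¹ * (p⁻¹ * q) * (q⁻¹ * xx) = y⁻¹ * xx := by group
      rwa [harg] at h
    have hkey : φ (y⁻¹ * xx) * f y * (starRingEnd ℂ) (f xx) - Φ0 i j
        = (φ (y⁻¹ * xx) - φ (p⁻¹ * q)) * f y * (starRingEnd ℂ) (f xx)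
          + φ (p⁻¹ * q) * (f y - f p) * (starRingEnd ℂ) (f xx)
          + φ (p⁻¹ * q) * f p * ((starRingEnd ℂ) (f xx) - (starRingEnd ℂ) (f q)) := by
      simp only [hΦ0def]
      ring
    rw [hkey]
    have h1 : ‖(φ (y⁻¹ * xx) - φ (p⁻¹ * q)) * f y * (starRingEnd ℂ) (f xx)‖
        ≤ ε * Cf * Cf := by
      rw [norm_mul, norm_mul, RCLike.norm_conj]
      gcongr ?_ * ?_ * ?_ <;> [exact hCf _; exact hCf _]
    have h2 : ‖φ (p⁻¹ * q) * (f y - f p) * (starRingEnd ℂ) (f xx)‖ ≤ C * ε * Cf := by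
      rw [norm_mul, norm_mul, RCLike.norm_conj]
      gcongr ?_ * ?_ * ?_ <;> [exact hC _; exact hCf _]
    have h3 : ‖φ (p⁻¹ * q) * f p * ((starRingEnd ℂ) (f xx) - (starRingEnd ℂ) (f q))‖
        ≤ C * Cf * ε := by
      rw [norm_mul, norm_mul, ← map_sub, RCLike.norm_conj]
      gcongr ?_ * ?_ * ?_ <;> [exact hC _; exact hCf _]
    calc ‖(φ (y⁻¹ * xx) - φ (p⁻¹ * q)) * f y * (starRingEnd ℂ) (f xx)
          + φ (p⁻¹ * q) * (f y - f p) * (starRingEnd ℂ) (f xx)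
          + φ (p⁻¹ * q) * f p * ((starRingEnd ℂ) (f xx) - (starRingEnd ℂ) (f q))‖
        ≤ ‖(φ (y⁻¹ * xx) - φ (p⁻¹ * q)) * f y * (starRingEnd ℂ) (f xx)‖
          + ‖φ (p⁻¹ * q) * (f y - f p) * (starRingEnd ℂ) (f xx)‖
          + ‖φ (p⁻¹ * q) * f p * ((starRingEnd ℂ) (f xx) - (starRingEnd ℂ) (f q))‖ :=
          norm_add₃_le
      _ ≤ ε * Cf * Cf + C * ε * Cf + C * Cf * ε := add_le_add (add_le_add h1 h2) h3
      _ = ε * M₁ := by rw [hM₁def]; ring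
  -- inner set-integral estimate
  have hInnerEst : ∀ i j : ℕ, i < n → j < n → ∀ y ∈ D i,
      ‖f y * H j y - Φ0 i j * ((lam (D j)).toReal : ℂ)‖
        ≤ ε * M₁ * (lam (D j)).toReal := by
    intro i j hi hj y hy
    have hconst : (∫ _ in D j, Φ0 i j ∂lam) = Φ0 i j * ((lam (D j)).toReal : ℂ) := by
      rw [setIntegral_const, Complex.real_smul, Measure.real]
      ring
    have hdiff : f y * H j y - Φ0 i j * ((lam (D j)).toReal : ℂ)
        = ∫ xx in D j, (φ (y⁻¹ * xx) * f y * (starRingEnd ℂ) (f xx) - Φ0 i j) ∂lam := by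
      rw [← hInner1 j y, ← hconst,
        ← integral_sub ((hFyint y).integrableOn)
          (integrableOn_const (hDfin j))]
    rw [hdiff]
    exact norm_setIntegral_le_of_norm_le_const (lt_top_iff_ne_top.2 (hDfin j))
      (fun xx hxx => hPoint i j hi hj y hy xx hxx)
  -- outer set-integral estimate
  have hAB : ∀ i j : ℕ, i < n → j < n →
      ‖(∫ y in D i, f y * H j y ∂lam)
          - Φ0 i j * ((lam (D j)).toReal : ℂ) * ((lam (D i)).toReal : ℂ)‖
        ≤ ε * M₁ * (lam (D j)).toReal * (lam (D i)).toReal := by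
    intro i j hi hj
    have hconst : (∫ _ in D i, Φ0 i j * ((lam (D j)).toReal : ℂ) ∂lam)
        = Φ0 i j * ((lam (D j)).toReal : ℂ) * ((lam (D i)).toReal : ℂ) := by
      rw [setIntegral_const, Complex.real_smul, Measure.real]
      ring
    rw [← hconst, ← integral_sub ((hfHint j).integrableOn)
      (integrableOn_const (hDfin i))]
    exact norm_setIntegral_le_of_norm_le_const (lt_top_iff_ne_top.2 (hDfin i))
      (fun y hy => hInnerEst i j hi hj y hy)
  -- apply positive definiteness
  set cc : ℕ → ℂ := fun i => (starRingEnd ℂ) (f (pts i)) * ((lam (D i)).toReal : ℂ)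
    with hccdef
  obtain ⟨hSim, hSre⟩ := hPD n (fun i => pts ↑i) (fun i => cc ↑i)
  have hSB : (∑ i : Fin n, ∑ j : Fin n,
        (starRingEnd ℂ) (cc ↑i) * cc ↑j * φ ((pts ↑i)⁻¹ * pts ↑j))
      = ∑ i ∈ Finset.range n, ∑ j ∈ Finset.range n,
        Φ0 i j * ((lam (D j)).toReal : ℂ) * ((lam (D i)).toReal : ℂ) := by
    rw [Fin.sum_univ_eq_sum_range
      (fun i => ∑ j : Fin n, (starRingEnd ℂ) (cc i) * cc ↑j * φ ((pts i)⁻¹ * pts ↑j)) n]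
    refine Finset.sum_congr rfl fun i _ => ?_
    rw [Fin.sum_univ_eq_sum_range
      (fun j => (starRingEnd ℂ) (cc i) * cc j * φ ((pts i)⁻¹ * pts j)) n]
    refine Finset.sum_congr rfl fun j _ => ?_
    simp only [hccdef, hΦ0def, map_mul, Complex.conj_conj, Complex.conj_ofReal]
    ring
  have hz2 : z = ∑ i ∈ Finset.range n, ∑ j ∈ Finset.range n,
      ∫ y in D i, f y * H j y ∂lam := by
    rw [hzsum]; exact Finset.sum_comm
  have hfinal : ‖z - (∑ i : Fin n, ∑ j : Fin n,
      (starRingEnd ℂ) (cc ↑i) * cc ↑j * φ ((pts ↑i)⁻¹ * pts ↑j))‖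
      ≤ ε * (M₁ * ((lam K).toReal * (lam K).toReal)) := by
    have hzdiff : z - (∑ i : Fin n, ∑ j : Fin n,
        (starRingEnd ℂ) (cc ↑i) * cc ↑j * φ ((pts ↑i)⁻¹ * pts ↑j))
        = ∑ i ∈ Finset.range n, ∑ j ∈ Finset.range n,
          ((∫ y in D i, f y * H j y ∂lam)
            - Φ0 i j * ((lam (D j)).toReal : ℂ) * ((lam (D i)).toReal : ℂ)) := by
      rw [hz2, hSB, ← Finset.sum_sub_distrib]
      exact Finset.sum_congr rfl fun i _ => (Finset.sum_sub_distrib _ _).symm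
    rw [hzdiff]
    calc ‖∑ i ∈ Finset.range n, ∑ j ∈ Finset.range n,
          ((∫ y in D i, f y * H j y ∂lam)
            - Φ0 i j * ((lam (D j)).toReal : ℂ) * ((lam (D i)).toReal : ℂ))‖
        ≤ ∑ i ∈ Finset.range n, ∑ j ∈ Finset.range n,
            ‖(∫ y in D i, f y * H j y ∂lam)
              - Φ0 i j * ((lam (D j)).toReal : ℂ) * ((lam (D i)).toReal : ℂ)‖ :=
          (norm_sum_le _ _).trans (Finset.sum_le_sum fun i _ => norm_sum_le _ _)
      _ ≤ ∑ i ∈ Finset.range n, ∑ j ∈ Finset.range n,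
            ε * M₁ * (lam (D j)).toReal * (lam (D i)).toReal :=
          Finset.sum_le_sum fun i hi => Finset.sum_le_sum fun j hj =>
            hAB i j (Finset.mem_range.1 hi) (Finset.mem_range.1 hj)
      _ = ε * (M₁ * ((lam K).toReal * (lam K).toReal)) := by
          calc ∑ i ∈ Finset.range n, ∑ j ∈ Finset.range n,
                ε * M₁ * (lam (D j)).toReal * (lam (D i)).toReal
              = ∑ i ∈ Finset.range n, ε * M₁ * (lam K).toReal * (lam (D i)).toReal := by
                refine Finset.sum_congr rfl fun i _ => ?_
                rw [← Finset.sum_mul, ← Finset.mul_sum, hsum_meas]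
            _ = ε * M₁ * (lam K).toReal * (lam K).toReal := by
                rw [← Finset.mul_sum, hsum_meas]
            _ = ε * (M₁ * ((lam K).toReal * (lam K).toReal)) := by ring
  exact ⟨_, hSim, hSre, hfinal⟩

/-- A bounded continuous function on a second countable locally compact group
is positive definite (in the finite-sum sense) if and only if it satisfies the
integrated positivity condition
`∬ φ (y⁻¹ x) f y conj (f x) dλ(x) dλ(y) ≥ 0` for every `f ∈ C_c(G)`. -/
theorem isPositiveDefinite_iff_integral
    {G : Type*} [Group G] [TopologicalSpace G] [IsTopologicalGroup G]
    [LocallyCompactSpace G] [T2Space G] [SecondCountableTopology G]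
    [MeasurableSpace G] [BorelSpace G]
    (lam : Measure G) [lam.IsHaarMeasure]
    (φ : G → ℂ) (hbd : ∃ C : ℝ, ∀ x : G, ‖φ x‖ ≤ C) (hcont : Continuous φ) :
    IsPositiveDefinite φ ↔
      ∀ f : G → ℂ, Continuous f → HasCompactSupport f →
        (∫ y : G, ∫ x : G,
            φ (y⁻¹ * x) * f y * (starRingEnd ℂ) (f x) ∂lam ∂lam).im = 0 ∧
        0 ≤ (∫ y : G, ∫ x : G,
            φ (y⁻¹ * x) * f y * (starRingEnd ℂ) (f x) ∂lam ∂lam).re := by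
  constructor
  · intro hPD f hf hfs
    exact aux_forward lam φ hbd hcont hPD f hf hfs
  · intro hyp n x c
    exact aux_backward lam φ hbd hcont hyp n x c
end
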